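/- arXiv:1009.6219 — 7 statements merged into one kernel-verified Lean document; each statement's English description precedes it below -/
import Mathlib

section
/- Let H and E be complex Hilbert spaces and let U be a unitary operator on the Hilbert space direct sum H ⊕ E with block decomposition U = [[A, B], [C, D]], where A : H → H, B : E → H, C : H → E, D : E → E are bounded linear operators (i.e. U(h, e) = (Ah + Be, Ch + De)). Let X be a bounded operator on H with ‖X‖ < 1. Then I_H − AX is invertible, and the bounded operator Q := D + C X (I_H − A X)^{-1} B on E satisfies the identity I_E − Q*Q = B* ((I_H − AX)^{-1})* (I_H − X*X) (I_H − AX)^{-1} B; consequently I_E − Q*Q is a positive operator and ‖Q‖ ≤ 1. -/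
open ContinuousLinearMap

set_option maxHeartbeats 1000000 in

/-- If `U = [[A, B], [C, D]]` is a unitary operator (surjective linear
isometry) on the Hilbert space direct sum `H ⊕ E` and `X` is an operator on `H` with
`‖X‖ < 1`, then `1 - A∘X` is invertible, and `Q := D + C X (1 - A X)⁻¹ B` satisfies
`1 - Q*Q = B* ((1 - AX)⁻¹)* (1 - X*X) (1 - AX)⁻¹ B`; hence `1 - Q*Q` is positive and
`‖Q‖ ≤ 1`. -/
theorem statement0
    {H E : Type} [NormedAddCommGroup H] [InnerProductSpace ℂ H] [CompleteSpace H]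
    [NormedAddCommGroup E] [InnerProductSpace ℂ E] [CompleteSpace E]
    (U : WithLp 2 (H × E) ≃ₗᵢ[ℂ] WithLp 2 (H × E))
    (A : H →L[ℂ] H) (B : E →L[ℂ] H) (C : H →L[ℂ] E) (D : E →L[ℂ] E)
    (hU : ∀ (h : H) (e : E),
      U ((WithLp.equiv 2 (H × E)).symm (h, e)) =
        (WithLp.equiv 2 (H × E)).symm (A h + B e, C h + D e))
    (X : H →L[ℂ] H) (hX : ‖X‖ < 1) :
    IsUnit (1 - A ∘L X) ∧
    (1 - adjoint (D + C ∘L X ∘L Ring.inverse (1 - A ∘L X) ∘L B) ∘L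
        (D + C ∘L X ∘L Ring.inverse (1 - A ∘L X) ∘L B) =
      adjoint B ∘L adjoint (Ring.inverse (1 - A ∘L X)) ∘L
        (1 - adjoint X ∘L X) ∘L Ring.inverse (1 - A ∘L X) ∘L B) ∧
    (1 - adjoint (D + C ∘L X ∘L Ring.inverse (1 - A ∘L X) ∘L B) ∘L
        (D + C ∘L X ∘L Ring.inverse (1 - A ∘L X) ∘L B)).IsPositive ∧
    ‖D + C ∘L X ∘L Ring.inverse (1 - A ∘L X) ∘L B‖ ≤ 1 := by
  have key : ∀ (h h' : H) (e e' : E),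
      (inner ℂ (A h + B e) (A h' + B e') : ℂ) + inner ℂ (C h + D e) (C h' + D e')
        = inner ℂ h h' + inner ℂ e e' := by
    intro h h' e e'
    have := U.inner_map_map ((WithLp.equiv 2 (H × E)).symm (h, e))
      ((WithLp.equiv 2 (H × E)).symm (h', e'))
    rw [hU, hU] at this
    simp [WithLp.prod_inner_apply] at this
    exact this
  -- block relations of U*U = 1
  have hCC : ∀ h : H, adjoint C (C h) = h - adjoint A (A h) := by
    intro h
    refine ext_inner_left ℂ fun h' => ?_
    have := key h' h 0 0
    simp only [map_zero, add_zero, inner_zero_left, inner_zero_right] at this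
    simp only [adjoint_inner_right, inner_sub_right]
    linear_combination this
  have hDC : ∀ h : H, adjoint D (C h) = -(adjoint B (A h)) := by
    intro h
    refine ext_inner_left ℂ fun e' => ?_
    have := key 0 h e' 0
    simp only [map_zero, add_zero, zero_add, inner_zero_left, inner_zero_right] at this
    simp only [adjoint_inner_right, inner_neg_right]
    linear_combination this
  have hCD : ∀ e : E, adjoint C (D e) = -(adjoint A (B e)) := by
    intro e
    refine ext_inner_left ℂ fun h' => ?_
    have := key h' 0 0 e
    simp only [map_zero, add_zero, zero_add, inner_zero_left, inner_zero_right] at this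
    simp only [adjoint_inner_right, inner_neg_right]
    linear_combination this
  have hDD : ∀ e : E, adjoint D (D e) = e - adjoint B (B e) := by
    intro e
    refine ext_inner_left ℂ fun e' => ?_
    have := key 0 0 e' e
    simp only [map_zero, zero_add, inner_zero_left, inner_zero_right] at this
    simp only [adjoint_inner_right, inner_sub_right]
    linear_combination this
  -- ‖A‖ ≤ 1, hence 1 - A X invertible
  have hAle : ∀ h : H, ‖A h‖ ≤ ‖h‖ := by
    intro h
    have := key h h 0 0
    simp only [map_zero, add_zero, inner_zero_left, inner_zero_right] at this
    have h1 : ‖A h‖ ^ 2 + ‖C h‖ ^ 2 = ‖h‖ ^ 2 := by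
      have h2 := congrArg Complex.re this
      simp only [Complex.add_re] at h2
      rw [← inner_self_eq_norm_sq (𝕜 := ℂ), ← inner_self_eq_norm_sq (𝕜 := ℂ),
        ← inner_self_eq_norm_sq (𝕜 := ℂ)]
      exact h2
    nlinarith [norm_nonneg (A h), norm_nonneg h, sq_nonneg (‖C h‖)]
  have hA1 : ‖A‖ ≤ 1 := A.opNorm_le_bound zero_le_one fun h => by simpa using hAle h
  have hAX : ‖A ∘L X‖ < 1 :=
    lt_of_le_of_lt ((opNorm_comp_le A X).trans
      (by nlinarith [norm_nonneg X, A.opNorm_nonneg])) hX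
  have hunit : IsUnit (1 - A ∘L X) := by
    simpa using (Units.oneSub (A ∘L X) hAX).isUnit
  obtain ⟨u, hu⟩ := id hunit
  have hRu : Ring.inverse (1 - A ∘L X) = (↑u⁻¹ : H →L[ℂ] H) := by
    rw [← hu]; exact Ring.inverse_unit u
  rw [hRu]
  set R : H →L[ℂ] H := ↑u⁻¹ with hRdef
  have hm : (1 - A ∘L X) ∘L R = 1 := by rw [← mul_def, ← hu, hRdef]; exact u.mul_inv
  have hr1 : ∀ z : H, A (X (R z)) = R z - z := by
    intro z
    have h1 := ContinuousLinearMap.ext_iff.mp hm z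
    simp only [comp_apply, sub_apply, one_apply] at h1
    exact eq_sub_of_add_eq (by rw [add_comm]; exact (sub_eq_iff_eq_add.mp h1).symm)
  have hr2 : ∀ z : H, adjoint R (adjoint X (adjoint A z)) = adjoint R z - z := by
    intro z
    have h1 := congrArg ContinuousLinearMap.adjoint hm
    rw [adjoint_comp] at h1
    have h2 := ContinuousLinearMap.ext_iff.mp h1 z
    rw [← star_eq_adjoint (1 - A ∘L X), ← star_eq_adjoint (1 : H →L[ℂ] H)] at h2
    rw [star_sub, star_one] at h2
    have h3 : star (A ∘L X) = adjoint X ∘L adjoint A := by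
      rw [star_eq_adjoint, adjoint_comp]
    rw [h3] at h2
    simp only [comp_apply, sub_apply, one_apply, map_sub] at h2
    exact eq_sub_of_add_eq (by rw [add_comm]; exact (sub_eq_iff_eq_add.mp h2).symm)
  -- main identity
  have main : 1 - adjoint (D + C ∘L X ∘L R ∘L B) ∘L (D + C ∘L X ∘L R ∘L B) =
      adjoint B ∘L adjoint R ∘L (1 - adjoint X ∘L X) ∘L R ∘L B := by
    ext e
    simp only [map_add, adjoint_comp, comp_apply, sub_apply, one_apply, add_apply]
    simp only [hDD, hDC, hCD, hCC, hr1, hr2, map_sub, map_add, map_neg, ContinuousLinearMap.one_apply]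
    abel
  have hP : (1 - adjoint X ∘L X).IsPositive := by
    constructor
    · rw [← isSelfAdjoint_iff_isSymmetric, isSelfAdjoint_iff', map_sub, adjoint_comp, adjoint_adjoint]
      congr 1
      rw [← star_eq_adjoint]
      exact star_one _
    · intro x
      have hx : ‖X x‖ ≤ ‖x‖ := by
        calc ‖X x‖ ≤ ‖X‖ * ‖x‖ := X.le_opNorm x
          _ ≤ 1 * ‖x‖ := mul_le_mul_of_nonneg_right hX.le (norm_nonneg x)
          _ = ‖x‖ := one_mul _
      rw [reApplyInnerSelf]
      simp only [sub_apply, ContinuousLinearMap.one_apply, comp_apply, inner_sub_left, adjoint_inner_left,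
        map_sub]
      rw [inner_self_eq_norm_sq, inner_self_eq_norm_sq]
      nlinarith [norm_nonneg (X x), norm_nonneg x]
  have pos : (1 - adjoint (D + C ∘L X ∘L R ∘L B) ∘L (D + C ∘L X ∘L R ∘L B)).IsPositive := by
    rw [main]
    have heq : adjoint B ∘L adjoint R ∘L (1 - adjoint X ∘L X) ∘L R ∘L B =
        adjoint (R ∘L B) ∘L (1 - adjoint X ∘L X) ∘L (R ∘L B) := by
      rw [adjoint_comp]
      simp only [comp_assoc]
    rw [heq]
    exact hP.adjoint_conj (R ∘L B)
  refine ⟨hunit, main, pos, ?_⟩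
  set Q : E →L[ℂ] E := D + C ∘L X ∘L R ∘L B with hQ
  refine opNorm_le_bound _ zero_le_one fun e => ?_
  have h0 := pos.2 e
  rw [reApplyInnerSelf] at h0
  simp only [sub_apply, ContinuousLinearMap.one_apply, comp_apply, inner_sub_left, map_sub] at h0
  have h1 : (inner ℂ (adjoint Q (Q e)) e : ℂ) = inner ℂ (Q e) (Q e) := adjoint_inner_left Q e (Q e)
  rw [h1, inner_self_eq_norm_sq, inner_self_eq_norm_sq] at h0
  rw [one_mul]
  nlinarith [norm_nonneg (Q e), norm_nonneg e]
end

section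
/- Let v₁ = (1/√3)(0, −1, 1, 1, 0), v₂ = (1/√3)(0, 1, −1, 1, 0), v₃ = (1/√3)(0, 1, 1, −1, 0) ∈ ℂ⁵, and for j = 1, 2, 3 let T_j ∈ M₅(ℂ) be the matrix whose (j+1, 1) entry is 1, whose fifth row equals v_j (i.e. (T_j)_{5,k} = (v_j)_k for k = 1, …, 5), and whose all other entries are 0. Then for every positive integer m and all matrices A₁, A₂, A₃ ∈ M_m(ℂ) such that ‖z₁A₁ + z₂A₂ + z₃A₃‖ ≤ 1 for all z ∈ ℂ³ with |z₁| ≤ 1, |z₂| ≤ 1, |z₃| ≤ 1, one has ‖A₁ ⊗ T₁ + A₂ ⊗ T₂ + A₃ ⊗ T₃‖ ≤ 1, where ⊗ denotes the Kronecker (tensor) product of matrices. -/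
open Matrix
open scoped Kronecker

/-- The operator norm of a complex matrix, induced by the Euclidean (ℓ²) norms. -/
noncomputable def l2OpNorm {m n : Type} [Fintype m] [Fintype n] [DecidableEq n]
    (M : Matrix m n ℂ) : ℝ :=
  ‖LinearMap.toContinuousLinearMap (Matrix.toEuclideanLin M)‖

/-- The Kaijser–Varopoulos matrices `T₁, T₂, T₃`. -/
noncomputable def KV.c : ℂ := (Real.sqrt 3 : ℂ)⁻¹

noncomputable def KV.T₁ : Matrix (Fin 5) (Fin 5) ℂ :=
  !![0, 0, 0, 0, 0;
     1, 0, 0, 0, 0;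
     0, 0, 0, 0, 0;
     0, 0, 0, 0, 0;
     0, -KV.c, KV.c, KV.c, 0]

noncomputable def KV.T₂ : Matrix (Fin 5) (Fin 5) ℂ :=
  !![0, 0, 0, 0, 0;
     0, 0, 0, 0, 0;
     1, 0, 0, 0, 0;
     0, 0, 0, 0, 0;
     0, KV.c, -KV.c, KV.c, 0]

noncomputable def KV.T₃ : Matrix (Fin 5) (Fin 5) ℂ :=
  !![0, 0, 0, 0, 0;
     0, 0, 0, 0, 0;
     0, 0, 0, 0, 0;
     1, 0, 0, 0, 0;
     0, KV.c, KV.c, -KV.c, 0]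

namespace KVproof

open Finset

/-- Sum of squared moduli of the entries of a vector. -/
noncomputable def S {n : Type} [Fintype n] (v : n → ℂ) : ℝ := ∑ i, ‖v i‖ ^ 2

/-- The vector viewed in `EuclideanSpace`. -/
noncomputable def Ev {n : Type} [Fintype n] (v : n → ℂ) : EuclideanSpace ℂ n :=
  (WithLp.equiv 2 (n → ℂ)).symm v

lemma norm_Ev {n : Type} [Fintype n] (v : n → ℂ) : ‖Ev v‖ = Real.sqrt (S v) := by
  rw [EuclideanSpace.norm_eq]; rfl

lemma S_nonneg {n : Type} [Fintype n] (v : n → ℂ) : 0 ≤ S v :=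
  Finset.sum_nonneg fun i _ => by positivity

lemma sq_norm_Ev {n : Type} [Fintype n] (v : n → ℂ) : ‖Ev v‖ ^ 2 = S v := by
  rw [norm_Ev, Real.sq_sqrt (S_nonneg v)]

lemma Ev_add {n : Type} [Fintype n] (u v : n → ℂ) : Ev (u + v) = Ev u + Ev v := rfl

/-- From operator-norm contraction to the squared-sum form. -/
lemma L1 {n p : Type} [Fintype n] [Fintype p] [DecidableEq n]
    (M : Matrix p n ℂ) (hM : l2OpNorm M ≤ 1) (v : n → ℂ) :
    S (M *ᵥ v) ≤ S v := by
  have h1 : toEuclideanLin M (Ev v) = Ev (M *ᵥ v) := rfl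
  have h2 := (LinearMap.toContinuousLinearMap (Matrix.toEuclideanLin M)).le_opNorm (Ev v)
  rw [LinearMap.coe_toContinuousLinearMap'] at h2
  rw [h1] at h2
  have h3 : ‖Ev (M *ᵥ v)‖ ≤ ‖Ev v‖ := by
    calc ‖Ev (M *ᵥ v)‖ ≤ l2OpNorm M * ‖Ev v‖ := h2
    _ ≤ 1 * ‖Ev v‖ := mul_le_mul_of_nonneg_right hM (norm_nonneg _)
    _ = ‖Ev v‖ := one_mul _
  calc S (M *ᵥ v) = ‖Ev (M *ᵥ v)‖ ^ 2 := (sq_norm_Ev _).symm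
  _ ≤ ‖Ev v‖ ^ 2 := pow_le_pow_left₀ (norm_nonneg _) h3 2
  _ = S v := sq_norm_Ev _

/-- From the squared-sum form to operator-norm contraction. -/
lemma L2 {n p : Type} [Fintype n] [Fintype p] [DecidableEq n]
    (M : Matrix p n ℂ) (h : ∀ v : n → ℂ, S (M *ᵥ v) ≤ S v) :
    l2OpNorm M ≤ 1 := by
  apply ContinuousLinearMap.opNorm_le_bound _ zero_le_one
  intro x
  rw [one_mul, LinearMap.coe_toContinuousLinearMap']
  have hx : x = Ev (fun i => x i) := rfl
  rw [hx]
  have h1 : toEuclideanLin M (Ev (fun i => x i)) = Ev (M *ᵥ (fun i => x i)) := rfl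
  rw [h1, norm_Ev, norm_Ev]
  exact Real.sqrt_le_sqrt (h _)

/-- Iterated parallelogram law in `ℂ`. -/
lemma quad (a b c : ℂ) :
    ‖a+b+c‖^2 + ‖a+b-c‖^2 + ‖a-b+c‖^2 + ‖a-b-c‖^2 = 4*(‖a‖^2+‖b‖^2+‖c‖^2) := by
  have h1 := parallelogram_law_with_norm ℂ (a+b) c
  have h2 := parallelogram_law_with_norm ℂ (a-b) c
  have h3 := parallelogram_law_with_norm ℂ a b
  simp only [pow_two]
  linarith

/-- Row bound: averaging over signs. -/
lemma row {m : ℕ} (A₁ A₂ A₃ : Matrix (Fin m) (Fin m) ℂ)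
    (h1 : ∀ v, S ((A₁+A₂+A₃) *ᵥ v) ≤ S v)
    (h2 : ∀ v, S ((A₁+A₂-A₃) *ᵥ v) ≤ S v)
    (h3 : ∀ v, S ((A₁-A₂+A₃) *ᵥ v) ≤ S v)
    (h4 : ∀ v, S ((A₁-A₂-A₃) *ᵥ v) ≤ S v)
    (v : Fin m → ℂ) :
    S (A₁ *ᵥ v) + S (A₂ *ᵥ v) + S (A₃ *ᵥ v) ≤ S v := by
  have key : S ((A₁+A₂+A₃) *ᵥ v) + S ((A₁+A₂-A₃) *ᵥ v) + S ((A₁-A₂+A₃) *ᵥ v)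
      + S ((A₁-A₂-A₃) *ᵥ v) = 4 * (S (A₁ *ᵥ v) + S (A₂ *ᵥ v) + S (A₃ *ᵥ v)) := by
    simp only [S, add_mulVec, sub_mulVec, Pi.add_apply, Pi.sub_apply,
      ← Finset.sum_add_distrib, Finset.mul_sum]
    exact Finset.sum_congr rfl fun i _ => quad _ _ _
  linarith [h1 v, h2 v, h3 v, h4 v]

/-- Column bound: triangle inequality plus Cauchy–Schwarz. -/
lemma col {m : ℕ} (B₁ B₂ B₃ : Matrix (Fin m) (Fin m) ℂ)
    (h1 : ∀ v, S (B₁ *ᵥ v) ≤ S v)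
    (h2 : ∀ v, S (B₂ *ᵥ v) ≤ S v)
    (h3 : ∀ v, S (B₃ *ᵥ v) ≤ S v)
    (v₁ v₂ v₃ : Fin m → ℂ) :
    S (B₁ *ᵥ v₁ + B₂ *ᵥ v₂ + B₃ *ᵥ v₃) ≤ 3 * (S v₁ + S v₂ + S v₃) := by
  have n1 : ‖Ev (B₁ *ᵥ v₁)‖ ≤ ‖Ev v₁‖ := by
    rw [norm_Ev, norm_Ev]; exact Real.sqrt_le_sqrt (h1 v₁)
  have n2 : ‖Ev (B₂ *ᵥ v₂)‖ ≤ ‖Ev v₂‖ := by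
    rw [norm_Ev, norm_Ev]; exact Real.sqrt_le_sqrt (h2 v₂)
  have n3 : ‖Ev (B₃ *ᵥ v₃)‖ ≤ ‖Ev v₃‖ := by
    rw [norm_Ev, norm_Ev]; exact Real.sqrt_le_sqrt (h3 v₃)
  have tri : ‖Ev (B₁ *ᵥ v₁ + B₂ *ᵥ v₂ + B₃ *ᵥ v₃)‖ ≤ ‖Ev v₁‖ + ‖Ev v₂‖ + ‖Ev v₃‖ := by
    rw [Ev_add, Ev_add]
    calc ‖Ev (B₁ *ᵥ v₁) + Ev (B₂ *ᵥ v₂) + Ev (B₃ *ᵥ v₃)‖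
        ≤ ‖Ev (B₁ *ᵥ v₁)‖ + ‖Ev (B₂ *ᵥ v₂)‖ + ‖Ev (B₃ *ᵥ v₃)‖ := norm_add₃_le
    _ ≤ ‖Ev v₁‖ + ‖Ev v₂‖ + ‖Ev v₃‖ := by linarith
  have e1 := sq_norm_Ev (B₁ *ᵥ v₁ + B₂ *ᵥ v₂ + B₃ *ᵥ v₃)
  have e2 := sq_norm_Ev v₁
  have e3 := sq_norm_Ev v₂
  have e4 := sq_norm_Ev v₃
  nlinarith [norm_nonneg (Ev (B₁ *ᵥ v₁ + B₂ *ᵥ v₂ + B₃ *ᵥ v₃)),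
    norm_nonneg (Ev v₁), norm_nonneg (Ev v₂), norm_nonneg (Ev v₃),
    sq_nonneg (‖Ev v₁‖ - ‖Ev v₂‖), sq_nonneg (‖Ev v₁‖ - ‖Ev v₃‖),
    sq_nonneg (‖Ev v₂‖ - ‖Ev v₃‖)]

lemma norm_c_sq : ‖KV.c‖ ^ 2 = 1 / 3 := by
  have h3 : (0:ℝ) ≤ 3 := by norm_num
  rw [KV.c, norm_inv, Complex.norm_real, Real.norm_eq_abs,
    abs_of_nonneg (Real.sqrt_nonneg 3)]
  rw [← Real.sqrt_inv]
  rw [Real.sq_sqrt (by positivity)]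
  norm_num

lemma S_csmul {m : ℕ} (w : Fin m → ℂ) : S (KV.c • w) = (1/3) * S w := by
  simp only [S, Finset.mul_sum]
  refine Finset.sum_congr rfl fun i _ => ?_
  have : ‖(KV.c • w) i‖ = ‖KV.c‖ * ‖w i‖ := by
    simp [norm_mul]
  rw [this, mul_pow, norm_c_sq]

end KVproof

/-- The Kaijser–Varopoulos contractions are completely contractive for
`MIN(ℓ¹₃)`: if `‖z₁A₁ + z₂A₂ + z₃A₃‖ ≤ 1` for all `z` in the closed polydisk, then
`‖A₁ ⊗ T₁ + A₂ ⊗ T₂ + A₃ ⊗ T₃‖ ≤ 1`. -/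
theorem statement4
    (m : ℕ) (hm : 0 < m) (A₁ A₂ A₃ : Matrix (Fin m) (Fin m) ℂ)
    (hA : ∀ z₁ z₂ z₃ : ℂ, ‖z₁‖ ≤ 1 → ‖z₂‖ ≤ 1 → ‖z₃‖ ≤ 1 →
      l2OpNorm (z₁ • A₁ + z₂ • A₂ + z₃ • A₃) ≤ 1) :
    l2OpNorm (A₁ ⊗ₖ KV.T₁ + A₂ ⊗ₖ KV.T₂ + A₃ ⊗ₖ KV.T₃) ≤ 1 := by
  classical
  open KVproof in
  -- squared-sum contraction for every sign combination
  have hS : ∀ z₁ z₂ z₃ : ℂ, ‖z₁‖ ≤ 1 → ‖z₂‖ ≤ 1 → ‖z₃‖ ≤ 1 →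
      ∀ v : Fin m → ℂ, KVproof.S ((z₁ • A₁ + z₂ • A₂ + z₃ • A₃) *ᵥ v) ≤ KVproof.S v :=
    fun z₁ z₂ z₃ h1 h2 h3 => KVproof.L1 _ (hA z₁ z₂ z₃ h1 h2 h3)
  have hppp : ∀ v, KVproof.S ((A₁+A₂+A₃) *ᵥ v) ≤ KVproof.S v := by
    intro v
    have := hS 1 1 1 (by simp) (by simp) (by simp) v
    simpa using this
  have hppm : ∀ v, KVproof.S ((A₁+A₂-A₃) *ᵥ v) ≤ KVproof.S v := by
    intro v
    have := hS 1 1 (-1) (by simp) (by simp) (by simp) v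
    simp only [one_smul, neg_smul, ← sub_eq_add_neg] at this
    exact this
  have hpmp : ∀ v, KVproof.S ((A₁-A₂+A₃) *ᵥ v) ≤ KVproof.S v := by
    intro v
    have := hS 1 (-1) 1 (by simp) (by simp) (by simp) v
    simp only [one_smul, neg_smul, ← sub_eq_add_neg] at this
    exact this
  have hpmm : ∀ v, KVproof.S ((A₁-A₂-A₃) *ᵥ v) ≤ KVproof.S v := by
    intro v
    have := hS 1 (-1) (-1) (by simp) (by simp) (by simp) v
    simp only [one_smul, neg_smul, ← sub_eq_add_neg] at this
    exact this
  have hmpp : ∀ v, KVproof.S ((-A₁+A₂+A₃) *ᵥ v) ≤ KVproof.S v := by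
    intro v
    have := hS (-1) 1 1 (by simp) (by simp) (by simp) v
    simp only [one_smul, neg_smul, ← sub_eq_add_neg] at this
    exact this
  apply KVproof.L2
  intro v
  set M : Matrix (Fin m × Fin 5) (Fin m × Fin 5) ℂ :=
    A₁ ⊗ₖ KV.T₁ + A₂ ⊗ₖ KV.T₂ + A₃ ⊗ₖ KV.T₃ with hM
  set c0 : Fin m → ℂ := fun k => v (k, 0) with hc0
  set c1 : Fin m → ℂ := fun k => v (k, 1) with hc1
  set c2 : Fin m → ℂ := fun k => v (k, 2) with hc2
  set c3 : Fin m → ℂ := fun k => v (k, 3) with hc3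
  set c4 : Fin m → ℂ := fun k => v (k, 4) with hc4
  -- components of M *ᵥ v
  have E0 : (fun i => (M *ᵥ v) (i, 0)) = (fun _ => (0:ℂ)) := by
    funext i
    simp [hM, mulVec, dotProduct, Fintype.sum_prod_type, Fin.sum_univ_five,
      KV.T₁, KV.T₂, KV.T₃]
  have E1 : (fun i => (M *ᵥ v) (i, 1)) = A₁ *ᵥ c0 := by
    funext i
    simp [hM, hc0, mulVec, dotProduct, Fintype.sum_prod_type, Fin.sum_univ_five,
      KV.T₁, KV.T₂, KV.T₃]
  have E2 : (fun i => (M *ᵥ v) (i, 2)) = A₂ *ᵥ c0 := by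
    funext i
    simp [hM, hc0, mulVec, dotProduct, Fintype.sum_prod_type, Fin.sum_univ_five,
      KV.T₁, KV.T₂, KV.T₃]
  have E3 : (fun i => (M *ᵥ v) (i, 3)) = A₃ *ᵥ c0 := by
    funext i
    simp [hM, hc0, mulVec, dotProduct, Fintype.sum_prod_type, Fin.sum_univ_five,
      KV.T₁, KV.T₂, KV.T₃]
  have E4 : (fun i => (M *ᵥ v) (i, 4))
      = KV.c • ((-A₁+A₂+A₃) *ᵥ c1 + (A₁-A₂+A₃) *ᵥ c2 + (A₁+A₂-A₃) *ᵥ c3) := by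
    funext i
    simp [hM, hc1, hc2, hc3, mulVec, dotProduct, Fintype.sum_prod_type, Fin.sum_univ_five,
      KV.T₁, KV.T₂, KV.T₃]
    rw [← Finset.sum_add_distrib, ← Finset.sum_add_distrib, Finset.mul_sum]
    exact Finset.sum_congr rfl fun k _ => by ring
  -- expand the squared sums over the product type
  have expM : KVproof.S (M *ᵥ v) = ∑ j : Fin 5, KVproof.S (fun i => (M *ᵥ v) (i, j)) := by
    simp only [KVproof.S]
    rw [Fintype.sum_prod_type_right]
  have expv : KVproof.S v = KVproof.S c0 + KVproof.S c1 + KVproof.S c2 + KVproof.S c3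
      + KVproof.S c4 := by
    simp only [KVproof.S]
    rw [Fintype.sum_prod_type_right, Fin.sum_univ_five]
  rw [expM, Fin.sum_univ_five, E0, E1, E2, E3, E4, expv]
  have hzero : KVproof.S (fun _ : Fin m => (0:ℂ)) = 0 := by simp [KVproof.S]
  have hrow : KVproof.S (A₁ *ᵥ c0) + KVproof.S (A₂ *ᵥ c0) + KVproof.S (A₃ *ᵥ c0)
      ≤ KVproof.S c0 := KVproof.row A₁ A₂ A₃ hppp hppm hpmp hpmm c0
  have hcol : KVproof.S ((-A₁+A₂+A₃) *ᵥ c1 + (A₁-A₂+A₃) *ᵥ c2 + (A₁+A₂-A₃) *ᵥ c3)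
      ≤ 3 * (KVproof.S c1 + KVproof.S c2 + KVproof.S c3) :=
    KVproof.col _ _ _ hmpp hpmp hppm c1 c2 c3
  have hsm := KVproof.S_csmul ((-A₁+A₂+A₃) *ᵥ c1 + (A₁-A₂+A₃) *ᵥ c2 + (A₁+A₂-A₃) *ᵥ c3)
  have h4 : 0 ≤ KVproof.S c4 := KVproof.S_nonneg c4
  rw [hzero, hsm]
  linarith
end

section
/- Let v₁ = (1/√3)(0, −1, 1, 1, 0), v₂ = (1/√3)(0, 1, −1, 1, 0), v₃ = (1/√3)(0, 1, 1, −1, 0) ∈ ℂ⁵, and for j = 1, 2, 3 let T_j ∈ M₅(ℂ) be the matrix whose (j+1, 1) entry is 1, whose fifth row equals v_j (i.e. (T_j)_{5,k} = (v_j)_k for k = 1, …, 5), and whose all other entries are 0. Then the matrices T₁, T₂, T₃ pairwise commute (T_i T_j = T_j T_i for all i, j) and each satisfies ‖T_j‖ = 1. -/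
open Matrix
open scoped Kronecker

open scoped Matrix.Norms.L2Operator in
lemma aux_l2OpNorm_eq (T : Matrix (Fin 5) (Fin 5) ℂ) : l2OpNorm T = ‖T‖ := rfl

lemma KV.star_c : star KV.c = KV.c := by
  simp [KV.c, ← Complex.ofReal_inv, Complex.conj_ofReal]

lemma KV.conj_c : (starRingEnd ℂ) KV.c = KV.c := KV.star_c

lemma KV.c_mul_c : KV.c * KV.c = (3 : ℂ)⁻¹ := by
  rw [KV.c, ← mul_inv, ← Complex.ofReal_mul, Real.mul_self_sqrt (by norm_num)]
  norm_num

noncomputable def KV.P₁ : Matrix (Fin 5) (Fin 5) ℂ :=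
  !![1, 0, 0, 0, 0;
     0, 1/3, -(1/3), -(1/3), 0;
     0, -(1/3), 1/3, 1/3, 0;
     0, -(1/3), 1/3, 1/3, 0;
     0, 0, 0, 0, 0]

noncomputable def KV.P₂ : Matrix (Fin 5) (Fin 5) ℂ :=
  !![1, 0, 0, 0, 0;
     0, 1/3, -(1/3), 1/3, 0;
     0, -(1/3), 1/3, -(1/3), 0;
     0, 1/3, -(1/3), 1/3, 0;
     0, 0, 0, 0, 0]

noncomputable def KV.P₃ : Matrix (Fin 5) (Fin 5) ℂ :=
  !![1, 0, 0, 0, 0;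
     0, 1/3, 1/3, -(1/3), 0;
     0, 1/3, 1/3, -(1/3), 0;
     0, -(1/3), -(1/3), 1/3, 0;
     0, 0, 0, 0, 0]

lemma KV.hP₁ : KV.T₁ᴴ * KV.T₁ = KV.P₁ := by
  ext i j
  fin_cases i <;> fin_cases j <;>
    simp [KV.T₁, KV.P₁, Matrix.mul_apply, Matrix.conjTranspose_apply,
      Fin.sum_univ_five, KV.star_c, KV.conj_c, KV.c_mul_c, mul_comm, mul_neg, neg_mul,
      Matrix.vecHead, Matrix.vecTail]

lemma KV.hP₂ : KV.T₂ᴴ * KV.T₂ = KV.P₂ := by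
  ext i j
  fin_cases i <;> fin_cases j <;>
    simp [KV.T₂, KV.P₂, Matrix.mul_apply, Matrix.conjTranspose_apply,
      Fin.sum_univ_five, KV.star_c, KV.conj_c, KV.c_mul_c, mul_comm, mul_neg, neg_mul,
      Matrix.vecHead, Matrix.vecTail]

lemma KV.hP₃ : KV.T₃ᴴ * KV.T₃ = KV.P₃ := by
  ext i j
  fin_cases i <;> fin_cases j <;>
    simp [KV.T₃, KV.P₃, Matrix.mul_apply, Matrix.conjTranspose_apply,
      Fin.sum_univ_five, KV.star_c, KV.conj_c, KV.c_mul_c, mul_comm, mul_neg, neg_mul,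
      Matrix.vecHead, Matrix.vecTail]

lemma KV.hPP₁ : KV.P₁ * KV.P₁ = KV.P₁ := by
  ext i j
  fin_cases i <;> fin_cases j <;>
    norm_num [KV.P₁, Matrix.mul_apply, Fin.sum_univ_five, Matrix.vecHead, Matrix.vecTail, Function.comp, Matrix.cons_val_two, Matrix.cons_val_three, Matrix.cons_val_four]

lemma KV.hPP₂ : KV.P₂ * KV.P₂ = KV.P₂ := by
  ext i j
  fin_cases i <;> fin_cases j <;>
    norm_num [KV.P₂, Matrix.mul_apply, Fin.sum_univ_five, Matrix.vecHead, Matrix.vecTail, Function.comp, Matrix.cons_val_two, Matrix.cons_val_three, Matrix.cons_val_four]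

lemma KV.hPP₃ : KV.P₃ * KV.P₃ = KV.P₃ := by
  ext i j
  fin_cases i <;> fin_cases j <;>
    norm_num [KV.P₃, Matrix.mul_apply, Fin.sum_univ_five, Matrix.vecHead, Matrix.vecTail, Function.comp, Matrix.cons_val_two, Matrix.cons_val_three, Matrix.cons_val_four]

open scoped Matrix.Norms.L2Operator in
lemma aux_norm_one (T : Matrix (Fin 5) (Fin 5) ℂ)
    (h : (Tᴴ * T) * (Tᴴ * T) = Tᴴ * T) (hne : T ≠ 0) : l2OpNorm T = 1 := by
  rw [aux_l2OpNorm_eq]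
  have h1 : ‖T‖ * ‖T‖ = ‖Tᴴ * T‖ := (Matrix.l2_opNorm_conjTranspose_mul_self T).symm
  have h2 : ‖Tᴴ * T‖ * ‖Tᴴ * T‖ = ‖Tᴴ * T‖ := by
    have := (Matrix.l2_opNorm_conjTranspose_mul_self (Tᴴ * T)).symm
    rwa [Matrix.conjTranspose_mul, Matrix.conjTranspose_conjTranspose,
      Matrix.mul_assoc, ← Matrix.mul_assoc Tᴴ T, h] at this
  have h3 : ‖Tᴴ * T‖ * (‖Tᴴ * T‖ - 1) = 0 := by ring_nf; linarith
  rcases mul_eq_zero.mp h3 with h0 | h0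
  · rw [h0] at h1
    exact absurd (norm_eq_zero.mp (mul_self_eq_zero.mp h1)) hne
  · have h0 : ‖Tᴴ * T‖ = 1 := by linarith
    rw [h0] at h1
    nlinarith [norm_nonneg T]

set_option maxHeartbeats 1000000 in
lemma KV.comm₁₂ : KV.T₁ * KV.T₂ = KV.T₂ * KV.T₁ := by
  ext i j
  fin_cases i <;> fin_cases j <;>
    simp [KV.T₁, KV.T₂, Matrix.mul_apply, Fin.sum_univ_five,
      Matrix.vecHead, Matrix.vecTail]

set_option maxHeartbeats 1000000 in
lemma KV.comm₁₃ : KV.T₁ * KV.T₃ = KV.T₃ * KV.T₁ := by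
  ext i j
  fin_cases i <;> fin_cases j <;>
    simp [KV.T₁, KV.T₃, Matrix.mul_apply, Fin.sum_univ_five,
      Matrix.vecHead, Matrix.vecTail]

set_option maxHeartbeats 1000000 in
lemma KV.comm₂₃ : KV.T₂ * KV.T₃ = KV.T₃ * KV.T₂ := by
  ext i j
  fin_cases i <;> fin_cases j <;>
    simp [KV.T₂, KV.T₃, Matrix.mul_apply, Fin.sum_univ_five,
      Matrix.vecHead, Matrix.vecTail]

set_option maxHeartbeats 1000000 in
/-- The Kaijser–Varopoulos matrices `T₁, T₂, T₃` pairwise commute and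
each has operator norm `1`. -/
theorem statement5 :
    (KV.T₁ * KV.T₂ = KV.T₂ * KV.T₁ ∧
     KV.T₁ * KV.T₃ = KV.T₃ * KV.T₁ ∧
     KV.T₂ * KV.T₃ = KV.T₃ * KV.T₂) ∧
    l2OpNorm KV.T₁ = 1 ∧ l2OpNorm KV.T₂ = 1 ∧ l2OpNorm KV.T₃ = 1 := by
  refine ⟨⟨KV.comm₁₂, KV.comm₁₃, KV.comm₂₃⟩, ?_, ?_, ?_⟩
  · refine aux_norm_one _ (by rw [KV.hP₁]; exact KV.hPP₁) ?_
    intro h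
    have := congrFun (congrFun h 1) 0
    simp [KV.T₁] at this
  · refine aux_norm_one _ (by rw [KV.hP₂]; exact KV.hPP₂) ?_
    intro h
    have := congrFun (congrFun h 2) 0
    simp [KV.T₂] at this
  · refine aux_norm_one _ (by rw [KV.hP₃]; exact KV.hPP₃) ?_
    intro h
    have := congrFun (congrFun h 3) 0
    simp [KV.T₃] at this
end

section
/- Let n and m be positive integers and A₁, …, A_n ∈ M_m(ℂ). If ‖z₁A₁ + ⋯ + z_nA_n‖ ≤ 1 for every z ∈ ℂⁿ with |z_j| = 1 for all j, then the matrix I_m − (A₁*A₁ + ⋯ + A_n*A_n) is positive semidefinite. -/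
open Matrix
open scoped ComplexOrder

namespace Stmt6Aux

def eps (b : Bool) : ℂ := if b then 1 else -1

lemma eps_abs (b : Bool) : ‖eps b‖ = 1 := by cases b <;> simp [eps]

lemma eps_star (b : Bool) : (starRingEnd ℂ) (eps b) = eps b := by cases b <;> simp [eps]

lemma eps_not (b : Bool) : eps (!b) = - eps b := by cases b <;> simp [eps]

lemma eps_mul_self (b : Bool) : eps b * eps b = 1 := by cases b <;> simp [eps]

lemma sum_eps_mul {n : ℕ} {j k : Fin n} (h : j ≠ k) :
    ∑ s : Fin n → Bool, eps (s j) * eps (s k) = 0 := by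
  classical
  let e : (Fin n → Bool) ≃ (Fin n → Bool) :=
    { toFun := fun s => Function.update s j (!s j)
      invFun := fun s => Function.update s j (!s j)
      left_inv := by
        intro s; funext i
        by_cases hi : i = j
        · subst hi; simp [Function.update]
        · simp [Function.update, hi]
      right_inv := by
        intro s; funext i
        by_cases hi : i = j
        · subst hi; simp [Function.update]
        · simp [Function.update, hi] }
  have key : ∑ s : Fin n → Bool, eps (s j) * eps (s k)
      = ∑ s : Fin n → Bool, -(eps (s j) * eps (s k)) := by
    refine Fintype.sum_equiv e _ _ (fun s => ?_)
    have h1 : e s j = !s j := by simp [e, Function.update]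
    have h2 : e s k = s k := by simp [e, Function.update, h.symm]
    rw [h1, h2, eps_not]
    ring
  have : (2 : ℂ) * ∑ s : Fin n → Bool, eps (s j) * eps (s k) = 0 := by
    rw [two_mul]
    nth_rewrite 2 [key]
    simp
  have h2 : (2 : ℂ) ≠ 0 := by norm_num
  exact (mul_eq_zero.mp this).resolve_left h2

lemma sum_mulVec' {ι : Type*} {m : ℕ} (s : Finset ι) (M : ι → Matrix (Fin m) (Fin m) ℂ)
    (v : Fin m → ℂ) : (∑ j ∈ s, M j) *ᵥ v = ∑ j ∈ s, (M j *ᵥ v) := by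
  induction s using Finset.cons_induction with
  | empty => simp
  | cons a t ha ih => simp [Matrix.add_mulVec, ih]

lemma sum_dot {ι : Type*} {m : ℕ} (s : Finset ι) (u : ι → Fin m → ℂ) (w : Fin m → ℂ) :
    (∑ j ∈ s, u j) ⬝ᵥ w = ∑ j ∈ s, u j ⬝ᵥ w := by
  simp only [dotProduct, Finset.sum_apply, Finset.sum_mul]
  exact Finset.sum_comm

lemma dot_sum {ι : Type*} {m : ℕ} (s : Finset ι) (u : ι → Fin m → ℂ) (w : Fin m → ℂ) :
    w ⬝ᵥ (∑ j ∈ s, u j) = ∑ j ∈ s, w ⬝ᵥ u j := by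
  simp only [dotProduct, Finset.sum_apply, Finset.mul_sum]
  exact Finset.sum_comm

/-- real quadratic form -/
noncomputable def r {m : ℕ} (v : Fin m → ℂ) : ℝ := ∑ i, Complex.normSq (v i)

lemma star_dot_self {m : ℕ} (v : Fin m → ℂ) : star v ⬝ᵥ v = (r v : ℂ) := by
  simp only [dotProduct, r, Pi.star_apply, Complex.ofReal_sum]
  refine Finset.sum_congr rfl fun i _ => ?_
  rw [Complex.star_def, ← Complex.normSq_eq_conj_mul_self]

lemma r_eq_norm_sq {m : ℕ} (v : Fin m → ℂ) :
    r v = ‖(WithLp.equiv 2 (Fin m → ℂ)).symm v‖ ^ 2 := by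
  rw [EuclideanSpace.norm_eq, Real.sq_sqrt (by positivity)]
  refine Finset.sum_congr rfl fun i _ => ?_
  have : ((WithLp.equiv 2 (Fin m → ℂ)).symm v) i = v i := rfl
  rw [this]
  simp [r, Complex.sq_norm]

lemma r_mulVec_le {m : ℕ} (B : Matrix (Fin m) (Fin m) ℂ) (hB : l2OpNorm B ≤ 1)
    (x : Fin m → ℂ) : r (B *ᵥ x) ≤ r x := by
  set L := LinearMap.toContinuousLinearMap (Matrix.toEuclideanLin B)
  set x' := (WithLp.equiv 2 (Fin m → ℂ)).symm x
  have hLx : L x' = (WithLp.equiv 2 (Fin m → ℂ)).symm (B *ᵥ x) := by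
    simp [L, x', Matrix.toEuclideanLin_apply_piLp_toLp]
  have h1 : ‖L x'‖ ≤ ‖x'‖ := by
    calc ‖L x'‖ ≤ ‖L‖ * ‖x'‖ := L.le_opNorm x'
    _ ≤ 1 * ‖x'‖ := by
        exact mul_le_mul_of_nonneg_right hB (norm_nonneg _)
    _ = ‖x'‖ := one_mul _
  rw [r_eq_norm_sq, r_eq_norm_sq, ← hLx]
  exact pow_le_pow_left₀ (norm_nonneg _) h1 2

end Stmt6Aux

open Stmt6Aux

/-- If `‖z₁A₁ + ⋯ + z_nA_n‖ ≤ 1` for all `z` on the `n`-torus, then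
`I − (A₁*A₁ + ⋯ + A_n*A_n)` is positive semidefinite. -/
theorem statement6
    (n m : ℕ) (hn : 0 < n) (hm : 0 < m) (A : Fin n → Matrix (Fin m) (Fin m) ℂ)
    (hA : ∀ z : Fin n → ℂ, (∀ j, ‖z j‖ = 1) →
      l2OpNorm (∑ j, z j • A j) ≤ 1) :
    ((1 : Matrix (Fin m) (Fin m) ℂ) - ∑ j, (A j)ᴴ * A j).PosSemidef := by
  classical
  rw [Matrix.posSemidef_iff_dotProduct_mulVec]
  constructor
  · -- Hermitian part
    simp [Matrix.IsHermitian, conjTranspose_sub, conjTranspose_sum, conjTranspose_mul]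
  intro x
  -- reduce to a real inequality
  have hexp : star x ⬝ᵥ ((1 - ∑ j, (A j)ᴴ * A j) *ᵥ x)
      = (r x : ℂ) - ∑ j, (r (A j *ᵥ x) : ℂ) := by
    rw [Matrix.sub_mulVec, Matrix.one_mulVec, dotProduct_sub, sum_mulVec', dot_sum,
      star_dot_self]
    congr 1
    refine Finset.sum_congr rfl fun j _ => ?_
    rw [← Matrix.mulVec_mulVec, Matrix.dotProduct_mulVec, ← Matrix.star_mulVec, star_dot_self]
  -- the averaging identity
  set c : Fin n → Fin n → ℂ := fun j k => star (A j *ᵥ x) ⬝ᵥ (A k *ᵥ x) with hc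
  have hterm : ∀ s : Fin n → Bool,
      star ((∑ j, eps (s j) • A j) *ᵥ x) ⬝ᵥ ((∑ j, eps (s j) • A j) *ᵥ x)
      = ∑ j, ∑ k, (eps (s j) * eps (s k)) * c j k := by
    intro s
    rw [sum_mulVec']
    simp only [Matrix.smul_mulVec]
    rw [star_sum, sum_dot]
    refine Finset.sum_congr rfl fun j _ => ?_
    rw [dot_sum]
    refine Finset.sum_congr rfl fun k _ => ?_
    rw [star_smul, smul_dotProduct, dotProduct_smul, hc]
    simp only [smul_eq_mul, Complex.star_def, eps_star]
    ring
  have havg : ∑ s : Fin n → Bool,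
      (star ((∑ j, eps (s j) • A j) *ᵥ x) ⬝ᵥ ((∑ j, eps (s j) • A j) *ᵥ x))
      = (2 ^ n : ℂ) * ∑ j, c j j := by
    simp only [hterm]
    rw [Finset.sum_comm]
    rw [Finset.mul_sum]
    refine Finset.sum_congr rfl fun j _ => ?_
    rw [Finset.sum_comm]
    rw [Finset.sum_eq_single j]
    · rw [← Finset.sum_mul]
      congr 1
      simp only [eps_mul_self]
      rw [Finset.sum_const]
      simp [Finset.card_univ]
    · intro k _ hk
      rw [← Finset.sum_mul, sum_eps_mul (Ne.symm hk), zero_mul]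
    · simp
  -- each term is ≤ r x (as complex reals)
  have hbound : ∀ s : Fin n → Bool, r ((∑ j, eps (s j) • A j) *ᵥ x) ≤ r x := by
    intro s
    exact r_mulVec_le _ (hA (fun j => eps (s j)) (fun j => eps_abs (s j))) x
  -- convert averaging identity to reals
  have hreal : (2 ^ n : ℝ) * ∑ j, r (A j *ᵥ x)
      = ∑ s : Fin n → Bool, r ((∑ j, eps (s j) • A j) *ᵥ x) := by
    have : ((2 ^ n : ℝ) * ∑ j, r (A j *ᵥ x) : ℂ)
        = ((∑ s : Fin n → Bool, r ((∑ j, eps (s j) • A j) *ᵥ x) : ℝ) : ℂ) := by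
      have e1 : ∀ j, ((r (A j *ᵥ x) : ℝ) : ℂ) = c j j := fun j => (star_dot_self _).symm
      have e2 : ∀ s : Fin n → Bool, ((r ((∑ j, eps (s j) • A j) *ᵥ x) : ℝ) : ℂ)
          = star ((∑ j, eps (s j) • A j) *ᵥ x) ⬝ᵥ ((∑ j, eps (s j) • A j) *ᵥ x) :=
        fun s => (star_dot_self _).symm
      push_cast
      rw [Finset.sum_congr rfl (fun j _ => e1 j), Finset.sum_congr rfl (fun s _ => e2 s)]
      exact havg.symm
    exact_mod_cast this
  have hsum_le : ∑ j, r (A j *ᵥ x) ≤ r x := by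
    have h2 : (0 : ℝ) < 2 ^ n := by positivity
    rw [← mul_le_mul_iff_right₀ h2, hreal]
    calc ∑ s : Fin n → Bool, r ((∑ j, eps (s j) • A j) *ᵥ x)
        ≤ ∑ s : Fin n → Bool, r x := Finset.sum_le_sum fun s _ => hbound s
      _ = (2 ^ n : ℝ) * r x := by
          rw [Finset.sum_const]; simp [Finset.card_univ, mul_comm]
  rw [hexp]
  have : ((r x - ∑ j, r (A j *ᵥ x) : ℝ) : ℂ) = (r x : ℂ) - ∑ j, (r (A j *ᵥ x) : ℂ) := by
    push_cast; ring
  rw [← this]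
  rw [Complex.zero_le_real]
  linarith
end

section
/- Let v₁ = (1/√3)(0, −1, 1, 1, 0), v₂ = (1/√3)(0, 1, −1, 1, 0), v₃ = (1/√3)(0, 1, 1, −1, 0) ∈ ℂ⁵, and for j = 1, 2, 3 let T_j ∈ M₅(ℂ) be the matrix whose (j+1, 1) entry is 1, whose fifth row equals v_j, and whose all other entries are 0. Then for every positive integer m and all A₁, A₂, A₃ ∈ M_m(ℂ), setting B₁ = (1/√3)(−A₁ + A₂ + A₃), B₂ = (1/√3)(A₁ − A₂ + A₃), B₃ = (1/√3)(A₁ + A₂ − A₃), one has ‖A₁ ⊗ T₁ + A₂ ⊗ T₂ + A₃ ⊗ T₃‖² = max( ‖A₁*A₁ + A₂*A₂ + A₃*A₃‖, ‖B₁B₁* + B₂B₂* + B₃B₃*‖ ). -/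
open Matrix
open scoped Kronecker

section KVAux

open scoped Matrix.Norms.L2Operator

lemma KV.enorm_sq {ι : Type*} [Fintype ι] (x : EuclideanSpace ℂ ι) :
    ‖x‖ ^ 2 = ∑ i, ‖x i‖ ^ 2 := by
  rw [EuclideanSpace.norm_eq, Real.sq_sqrt (by positivity)]

lemma KV.sq_le_imp_le {a b : ℝ} (hb : 0 ≤ b) (h : a ^ 2 ≤ b ^ 2) (ha : 0 ≤ a) : a ≤ b := by
  nlinarith

lemma KV.l2OpNorm_eq_norm {ι κ : Type} [Fintype ι] [Fintype κ] [DecidableEq κ]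
    (M : Matrix ι κ ℂ) : l2OpNorm M = ‖M‖ := rfl

lemma KV.opNorm_le' {ι κ : Type*} [Fintype ι] [Fintype κ] [DecidableEq κ]
    (M : Matrix ι κ ℂ) {c : ℝ} (hc : 0 ≤ c)
    (h : ∀ x : EuclideanSpace ℂ κ, ‖(Matrix.toEuclideanLin M x : EuclideanSpace ℂ ι)‖ ≤ c * ‖x‖) :
    ‖M‖ ≤ c := by
  rw [Matrix.l2_opNorm_def]
  exact ContinuousLinearMap.opNorm_le_bound _ hc h

lemma KV.toEuclideanLin_apply' {ι κ : Type*} [Fintype ι] [Fintype κ] [DecidableEq κ]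
    (M : Matrix ι κ ℂ) (x : EuclideanSpace ℂ κ) (i : ι) :
    (Matrix.toEuclideanLin M x : EuclideanSpace ℂ ι) i = (M *ᵥ x) i := rfl

lemma KV.opNorm_submatrix_le {ι κ ι' κ' : Type*} [Fintype ι] [Fintype κ] [Fintype ι'] [Fintype κ']
    [DecidableEq κ] [DecidableEq κ'] (M : Matrix ι κ ℂ) {f : ι' → ι} {g : κ' → κ}
    (hf : Function.Injective f) (hg : Function.Injective g) :
    ‖M.submatrix f g‖ ≤ ‖M‖ := by
  apply KV.opNorm_le' _ (norm_nonneg M)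
  intro x
  classical
  set x' : EuclideanSpace ℂ κ := WithLp.toLp 2 (Function.extend g x 0 : κ → ℂ) with hx'def
  have hext0 : ∀ j, j ∉ Finset.univ.image g → x' j = 0 := by
    intro j hj
    have : ¬ ∃ i, g i = j := by simpa [Finset.mem_image] using hj
    simp [hx'def, Function.extend_apply' _ _ _ this]
  have hx' : ‖x'‖ = ‖x‖ := by
    have h1 : ∑ j, ‖x' j‖ ^ 2 = ∑ j ∈ Finset.univ.image g, ‖x' j‖ ^ 2 := by
      symm
      apply Finset.sum_subset (Finset.subset_univ _)
      intro j _ hj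
      simp [hext0 j hj]
    rw [EuclideanSpace.norm_eq, EuclideanSpace.norm_eq, h1,
      Finset.sum_image (fun a _ b _ h => hg h)]
    simp [hx'def, hg.extend_apply]
  have key : ∀ i', (M.submatrix f g *ᵥ (x : κ' → ℂ)) i' = (M *ᵥ x') (f i') := by
    intro i'
    simp only [Matrix.mulVec, dotProduct, Matrix.submatrix_apply]
    rw [show (∑ j, M (f i') j * x' j) = ∑ j ∈ Finset.univ.image g, M (f i') j * x' j by
      symm
      apply Finset.sum_subset (Finset.subset_univ _)
      intro j _ hj
      simp [hext0 j hj],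
      Finset.sum_image (fun a _ b _ h => hg h)]
    simp [hx'def, hg.extend_apply]
  set y : EuclideanSpace ℂ ι := (EuclideanSpace.equiv ι ℂ).symm (M *ᵥ x') with hydef
  have hsq : ‖(Matrix.toEuclideanLin (M.submatrix f g) x : EuclideanSpace ℂ ι')‖ ^ 2
      ≤ ‖y‖ ^ 2 := by
    rw [KV.enorm_sq, KV.enorm_sq]
    have hterm : ∀ i', ‖(Matrix.toEuclideanLin (M.submatrix f g) x : EuclideanSpace ℂ ι') i'‖ ^ 2
        = ‖y (f i')‖ ^ 2 := by
      intro i'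
      rw [KV.toEuclideanLin_apply', key i']
      rfl
    rw [Finset.sum_congr rfl (fun i' _ => hterm i')]
    have heq : ∑ i' : ι', ‖y (f i')‖ ^ 2 = ∑ i ∈ Finset.univ.image f, ‖y i‖ ^ 2 :=
      (Finset.sum_image (g := f) (f := fun i => ‖y i‖ ^ 2) (fun a _ b _ h => hf h)).symm
    rw [heq]
    apply Finset.sum_le_sum_of_subset_of_nonneg (Finset.subset_univ _)
    intros; positivity
  calc ‖(Matrix.toEuclideanLin (M.submatrix f g) x : EuclideanSpace ℂ ι')‖
      ≤ ‖y‖ := KV.sq_le_imp_le (norm_nonneg _) hsq (norm_nonneg _)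
    _ ≤ ‖M‖ * ‖x'‖ := Matrix.l2_opNorm_mulVec M x'
    _ = ‖M‖ * ‖x‖ := by rw [hx']

lemma KV.max_sq {a b : ℝ} (ha : 0 ≤ a) (hb : 0 ≤ b) :
    (max a b) ^ 2 = max (a ^ 2) (b ^ 2) := by
  rcases le_total a b with h | h
  · rw [max_eq_right h, max_eq_right (by nlinarith)]
  · rw [max_eq_left h, max_eq_left (by nlinarith)]

end KVAux

open scoped Matrix.Norms.L2Operator

/-- For the Kaijser–Varopoulos matrices,
`‖A₁ ⊗ T₁ + A₂ ⊗ T₂ + A₃ ⊗ T₃‖²` equals the maximum of the norm of the first block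
column and of the last block row. -/
theorem statement7
    (m : ℕ) (hm : 0 < m) (A₁ A₂ A₃ B₁ B₂ B₃ : Matrix (Fin m) (Fin m) ℂ)
    (hB₁ : B₁ = ((Real.sqrt 3 : ℂ))⁻¹ • (-A₁ + A₂ + A₃))
    (hB₂ : B₂ = ((Real.sqrt 3 : ℂ))⁻¹ • (A₁ - A₂ + A₃))
    (hB₃ : B₃ = ((Real.sqrt 3 : ℂ))⁻¹ • (A₁ + A₂ - A₃)) :
    l2OpNorm (A₁ ⊗ₖ KV.T₁ + A₂ ⊗ₖ KV.T₂ + A₃ ⊗ₖ KV.T₃) ^ 2 =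
      max (l2OpNorm (A₁ᴴ * A₁ + A₂ᴴ * A₂ + A₃ᴴ * A₃))
        (l2OpNorm (B₁ * B₁ᴴ + B₂ * B₂ᴴ + B₃ * B₃ᴴ)) := by
  rw [KV.l2OpNorm_eq_norm, KV.l2OpNorm_eq_norm, KV.l2OpNorm_eq_norm]
  set S : Matrix (Fin m × Fin 5) (Fin m × Fin 5) ℂ :=
    A₁ ⊗ₖ KV.T₁ + A₂ ⊗ₖ KV.T₂ + A₃ ⊗ₖ KV.T₃ with hS
  set Cm : Matrix (Fin m × Fin 3) (Fin m) ℂ :=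
    Matrix.of (fun p c' => ![A₁, A₂, A₃] p.2 p.1 c') with hCm
  set Rm : Matrix (Fin m) (Fin m × Fin 3) ℂ :=
    Matrix.of (fun r p => ![B₁, B₂, B₃] p.2 r p.1) with hRm
  have i1 : ((0 : Fin 3).succ.castSucc : Fin 5) = 1 := rfl
  have i2 : ((1 : Fin 3).succ.castSucc : Fin 5) = 2 := rfl
  have i3 : ((2 : Fin 3).succ.castSucc : Fin 5) = 3 := rfl
  have j1 : (Fin.castSucc (1 : Fin 4) : Fin 5) = 1 := rfl
  have j2 : (Fin.castSucc (2 : Fin 4) : Fin 5) = 2 := rfl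
  have j3 : (Fin.castSucc (3 : Fin 4) : Fin 5) = 3 := rfl
  have hfinj : Function.Injective
      (fun p : Fin m × Fin 3 => ((p.1, p.2.succ.castSucc) : Fin m × Fin 5)) := by
    intro a b h
    simp only [Prod.mk.injEq] at h
    exact Prod.ext h.1 (Fin.succ_injective _ (Fin.castSucc_injective _ h.2))
  have hginj : Function.Injective (fun c : Fin m => ((c, 0) : Fin m × Fin 5)) := by
    intro a b h
    simpa using congrArg Prod.fst h
  have hf4inj : Function.Injective (fun r : Fin m => ((r, 4) : Fin m × Fin 5)) := by
    intro a b h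
    simpa using congrArg Prod.fst h
  have hCsub : Cm = S.submatrix
      (fun p : Fin m × Fin 3 => ((p.1, p.2.succ.castSucc) : Fin m × Fin 5))
      (fun c : Fin m => ((c, 0) : Fin m × Fin 5)) := by
    ext ⟨r, j⟩ c'
    fin_cases j <;>
      simp [hS, hCm, Matrix.kroneckerMap_apply, KV.T₁, KV.T₂, KV.T₃, i1, i2, i3, j1, j2, j3, Matrix.vecHead, Matrix.vecTail]
  have hRsub : Rm = S.submatrix (fun r : Fin m => ((r, 4) : Fin m × Fin 5))
      (fun p : Fin m × Fin 3 => ((p.1, p.2.succ.castSucc) : Fin m × Fin 5)) := by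
    ext r ⟨c', k⟩
    fin_cases k <;>
      · simp [hS, hRm, Matrix.kroneckerMap_apply, KV.T₁, KV.T₂, KV.T₃, i1, i2, i3, j1, j2, j3, Matrix.vecHead, Matrix.vecTail, hB₁, hB₂, hB₃,
          KV.c, Matrix.smul_apply, Matrix.add_apply, Matrix.sub_apply, Matrix.neg_apply]
        ring
  have hCC : Cmᴴ * Cm = A₁ᴴ * A₁ + A₂ᴴ * A₂ + A₃ᴴ * A₃ := by
    ext a b
    simp [hCm, Matrix.mul_apply, Matrix.conjTranspose_apply, Fintype.sum_prod_type,
      Fin.sum_univ_three, Finset.sum_add_distrib]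
  have hRR : Rm * Rmᴴ = B₁ * B₁ᴴ + B₂ * B₂ᴴ + B₃ * B₃ᴴ := by
    ext a b
    simp [hRm, Matrix.mul_apply, Matrix.conjTranspose_apply, Fintype.sum_prod_type,
      Fin.sum_univ_three, Finset.sum_add_distrib]
  set K : ℝ := max ‖Cm‖ ‖Rm‖ with hK
  have hK0 : 0 ≤ K := le_trans (norm_nonneg Cm) (le_max_left _ _)
  have hup : ‖S‖ ≤ K := by
    apply KV.opNorm_le' _ hK0
    intro x
    set x₀ : EuclideanSpace ℂ (Fin m) := WithLp.toLp 2 (fun c => x (c, 0)) with hx₀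
    set xt : EuclideanSpace ℂ (Fin m × Fin 3) :=
      WithLp.toLp 2 (fun p => x (p.1, p.2.succ.castSucc)) with hxt
    have h0 : ∀ r : Fin m, (S *ᵥ (x : Fin m × Fin 5 → ℂ)) (r, 0) = 0 := by
      intro r
      simp only [Matrix.mulVec, dotProduct]
      rw [Fintype.sum_prod_type]
      apply Finset.sum_eq_zero
      intro c _
      rw [Fin.sum_univ_five]
      simp [hS, Matrix.kroneckerMap_apply, KV.T₁, KV.T₂, KV.T₃, i1, i2, i3, j1, j2, j3, Matrix.vecHead, Matrix.vecTail]
    have h1 : ∀ r : Fin m, (S *ᵥ (x : Fin m × Fin 5 → ℂ)) (r, 1)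
        = (Cm *ᵥ (x₀ : Fin m → ℂ)) (r, 0) := by
      intro r
      simp only [Matrix.mulVec, dotProduct]
      rw [Fintype.sum_prod_type]
      apply Finset.sum_congr rfl
      intro c _
      rw [Fin.sum_univ_five]
      simp [hS, hCm, hx₀, Matrix.kroneckerMap_apply, KV.T₁, KV.T₂, KV.T₃, i1, i2, i3, j1, j2, j3, Matrix.vecHead, Matrix.vecTail]
    have h2 : ∀ r : Fin m, (S *ᵥ (x : Fin m × Fin 5 → ℂ)) (r, 2)
        = (Cm *ᵥ (x₀ : Fin m → ℂ)) (r, 1) := by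
      intro r
      simp only [Matrix.mulVec, dotProduct]
      rw [Fintype.sum_prod_type]
      apply Finset.sum_congr rfl
      intro c _
      rw [Fin.sum_univ_five]
      simp [hS, hCm, hx₀, Matrix.kroneckerMap_apply, KV.T₁, KV.T₂, KV.T₃, i1, i2, i3, j1, j2, j3, Matrix.vecHead, Matrix.vecTail]
    have h3 : ∀ r : Fin m, (S *ᵥ (x : Fin m × Fin 5 → ℂ)) (r, 3)
        = (Cm *ᵥ (x₀ : Fin m → ℂ)) (r, 2) := by
      intro r
      simp only [Matrix.mulVec, dotProduct]
      rw [Fintype.sum_prod_type]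
      apply Finset.sum_congr rfl
      intro c _
      rw [Fin.sum_univ_five]
      simp [hS, hCm, hx₀, Matrix.kroneckerMap_apply, KV.T₁, KV.T₂, KV.T₃, i1, i2, i3, j1, j2, j3, Matrix.vecHead, Matrix.vecTail]
    have h4 : ∀ r : Fin m, (S *ᵥ (x : Fin m × Fin 5 → ℂ)) (r, 4)
        = (Rm *ᵥ (xt : Fin m × Fin 3 → ℂ)) r := by
      intro r
      simp only [Matrix.mulVec, dotProduct]
      rw [Fintype.sum_prod_type, Fintype.sum_prod_type]
      apply Finset.sum_congr rfl
      intro c _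
      trans (B₁ r c * x (c, 1) + B₂ r c * x (c, 2) + B₃ r c * x (c, 3))
      · rw [Fin.sum_univ_five]
        simp [hS, Matrix.kroneckerMap_apply, KV.T₁, KV.T₂, KV.T₃, hB₁, hB₂, hB₃, KV.c,
          Matrix.smul_apply, Matrix.add_apply, Matrix.sub_apply, Matrix.neg_apply,
          Matrix.vecHead, Matrix.vecTail]
        ring
      · rw [Fin.sum_univ_three]
        rfl
    set yC : EuclideanSpace ℂ (Fin m × Fin 3) :=
      (EuclideanSpace.equiv (Fin m × Fin 3) ℂ).symm (Cm *ᵥ x₀) with hyC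
    set yR : EuclideanSpace ℂ (Fin m) :=
      (EuclideanSpace.equiv (Fin m) ℂ).symm (Rm *ᵥ xt) with hyR
    have hnorm : ‖(Matrix.toEuclideanLin S x : EuclideanSpace ℂ (Fin m × Fin 5))‖ ^ 2
        = ‖yC‖ ^ 2 + ‖yR‖ ^ 2 := by
      rw [KV.enorm_sq, KV.enorm_sq, KV.enorm_sq]
      have hC' : ∑ p : Fin m × Fin 3, ‖yC p‖ ^ 2
          = ∑ r : Fin m, ∑ j : Fin 3, ‖(Cm *ᵥ (x₀ : Fin m → ℂ)) (r, j)‖ ^ 2 := by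
        rw [Fintype.sum_prod_type]; rfl
      have hx' : ∑ p : Fin m × Fin 5,
          ‖(Matrix.toEuclideanLin S x : EuclideanSpace ℂ (Fin m × Fin 5)) p‖ ^ 2
          = ∑ r : Fin m, ∑ s : Fin 5, ‖(S *ᵥ (x : Fin m × Fin 5 → ℂ)) (r, s)‖ ^ 2 := by
        rw [Fintype.sum_prod_type]; rfl
      rw [hx', hC']
      have : ∀ r : Fin m, ∑ s : Fin 5, ‖(S *ᵥ (x : Fin m × Fin 5 → ℂ)) (r, s)‖ ^ 2
          = (∑ j : Fin 3, ‖(Cm *ᵥ (x₀ : Fin m → ℂ)) (r, j)‖ ^ 2)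
            + ‖(Rm *ᵥ (xt : Fin m × Fin 3 → ℂ)) r‖ ^ 2 := by
        intro r
        rw [Fin.sum_univ_five, Fin.sum_univ_three, h0 r, h1 r, h2 r, h3 r, h4 r]
        simp
        try ring
      rw [Finset.sum_congr rfl (fun r _ => this r), Finset.sum_add_distrib]
      rfl
    have hxle : ‖x₀‖ ^ 2 + ‖xt‖ ^ 2 ≤ ‖x‖ ^ 2 := by
      rw [KV.enorm_sq, KV.enorm_sq, KV.enorm_sq, Fintype.sum_prod_type, Fintype.sum_prod_type,
        ← Finset.sum_add_distrib]
      apply Finset.sum_le_sum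
      intro c _
      rw [Fin.sum_univ_three, Fin.sum_univ_five]
      show ‖x (c, 0)‖ ^ 2 + (‖x (c, 1)‖ ^ 2 + ‖x (c, 2)‖ ^ 2 + ‖x (c, 3)‖ ^ 2)
          ≤ ‖x (c, 0)‖ ^ 2 + ‖x (c, 1)‖ ^ 2 + ‖x (c, 2)‖ ^ 2 + ‖x (c, 3)‖ ^ 2 + ‖x (c, 4)‖ ^ 2
      have h5 : (0:ℝ) ≤ ‖x (c, 4)‖ ^ 2 := sq_nonneg _
      linarith
    have hCle : ‖yC‖ ≤ ‖Cm‖ * ‖x₀‖ := Matrix.l2_opNorm_mulVec Cm x₀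
    have hRle : ‖yR‖ ≤ ‖Rm‖ * ‖xt‖ := Matrix.l2_opNorm_mulVec Rm xt
    have hfinal : ‖(Matrix.toEuclideanLin S x : EuclideanSpace ℂ (Fin m × Fin 5))‖ ^ 2
        ≤ (K * ‖x‖) ^ 2 := by
      rw [hnorm]
      calc ‖yC‖ ^ 2 + ‖yR‖ ^ 2
          ≤ (‖Cm‖ * ‖x₀‖) ^ 2 + (‖Rm‖ * ‖xt‖) ^ 2 :=
            add_le_add (pow_le_pow_left₀ (norm_nonneg _) hCle 2)
              (pow_le_pow_left₀ (norm_nonneg _) hRle 2)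
        _ ≤ (K * ‖x₀‖) ^ 2 + (K * ‖xt‖) ^ 2 :=
            add_le_add
              (pow_le_pow_left₀ (by positivity)
                (mul_le_mul_of_nonneg_right (le_max_left _ _) (norm_nonneg _)) 2)
              (pow_le_pow_left₀ (by positivity)
                (mul_le_mul_of_nonneg_right (le_max_right _ _) (norm_nonneg _)) 2)
        _ = K ^ 2 * (‖x₀‖ ^ 2 + ‖xt‖ ^ 2) := by ring
        _ ≤ K ^ 2 * ‖x‖ ^ 2 := by
            apply mul_le_mul_of_nonneg_left hxle (by positivity)
        _ = (K * ‖x‖) ^ 2 := by ring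
    exact KV.sq_le_imp_le (by positivity) hfinal (norm_nonneg _)
  have hlo : K ≤ ‖S‖ := by
    apply max_le
    · rw [hCsub]; exact KV.opNorm_submatrix_le _ hfinj hginj
    · rw [hRsub]; exact KV.opNorm_submatrix_le _ hf4inj hfinj
  have hSK : ‖S‖ = K := le_antisymm hup hlo
  rw [hSK, hK, KV.max_sq (norm_nonneg _) (norm_nonneg _), ← hCC, ← hRR]
  congr 1
  · rw [Matrix.l2_opNorm_conjTranspose_mul_self, sq]
  · rw [show Rm * Rmᴴ = (Rmᴴ)ᴴ * Rmᴴ by rw [Matrix.conjTranspose_conjTranspose],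
      Matrix.l2_opNorm_conjTranspose_mul_self, Matrix.l2_opNorm_conjTranspose, sq]
end

section
/- Let n, N be positive integers, K′ a complex Hilbert space, U a unitary operator on K′ ⊕ ℂ^N with block decomposition U = [[A, B], [C, D]] (A : K′ → K′, B : ℂ^N → K′, C : K′ → ℂ^N, D : ℂ^N → ℂ^N), and let S₁, …, S_n ∈ B(K′). Define σ(z) := z₁S₁ + ⋯ + z_nS_n for z ∈ ℂⁿ and Ω := { z ∈ ℂⁿ : ‖σ(z)‖ < 1 }. Then Ω is open, for each z ∈ Ω the operator I_{K′} − σ(z)A is invertible, and the function f(z) := D + C (I_{K′} − σ(z) A)^{-1} σ(z) B, taking values in B(ℂ^N), is analytic (holomorphic) on Ω and satisfies ‖f(z)‖ ≤ 1 for every z ∈ Ω. -/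
open ContinuousLinearMap

set_option maxHeartbeats 1000000

/-- If `U = [[A, B], [C, D]]` is a unitary on `K' ⊕ ℂ^N` and
`σ(z) = z₁S₁ + ⋯ + z_nS_n`, then on `Ω = {z : ‖σ(z)‖ < 1}` (which is open) the operator
`I − σ(z)A` is invertible, and the transfer function
`f(z) = D + C(I − σ(z)A)⁻¹σ(z)B` is analytic on `Ω` with `‖f(z)‖ ≤ 1` there. -/
theorem statement11
    {n N : ℕ} (hn : 0 < n) (hN : 0 < N)
    {K' : Type} [NormedAddCommGroup K'] [InnerProductSpace ℂ K'] [CompleteSpace K']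
    (U : WithLp 2 (K' × EuclideanSpace ℂ (Fin N)) ≃ₗᵢ[ℂ]
      WithLp 2 (K' × EuclideanSpace ℂ (Fin N)))
    (A : K' →L[ℂ] K') (B : EuclideanSpace ℂ (Fin N) →L[ℂ] K')
    (C : K' →L[ℂ] EuclideanSpace ℂ (Fin N))
    (D : EuclideanSpace ℂ (Fin N) →L[ℂ] EuclideanSpace ℂ (Fin N))
    (hU : ∀ (k : K') (x : EuclideanSpace ℂ (Fin N)),
      U ((WithLp.equiv 2 (K' × EuclideanSpace ℂ (Fin N))).symm (k, x)) =
        (WithLp.equiv 2 (K' × EuclideanSpace ℂ (Fin N))).symm (A k + B x, C k + D x))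
    (S : Fin n → K' →L[ℂ] K')
    (Ω : Set (EuclideanSpace ℂ (Fin n)))
    (hΩ : Ω = {z : EuclideanSpace ℂ (Fin n) | ‖∑ j, z j • S j‖ < 1})
    (f : EuclideanSpace ℂ (Fin n) →
      EuclideanSpace ℂ (Fin N) →L[ℂ] EuclideanSpace ℂ (Fin N))
    (hf : ∀ z, f z = D + C ∘L Ring.inverse (1 - (∑ j, z j • S j) ∘L A) ∘L
      (∑ j, z j • S j) ∘L B) :
    IsOpen Ω ∧
    (∀ z ∈ Ω, IsUnit (1 - (∑ j, z j • S j) ∘L A)) ∧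
    AnalyticOnNhd ℂ f Ω ∧
    ∀ z ∈ Ω, ‖f z‖ ≤ 1 := by
  -- σ is analytic (hence continuous) everywhere
  have hσan : ∀ z₀, AnalyticAt ℂ
      (fun z : EuclideanSpace ℂ (Fin n) => ∑ j, z j • S j) z₀ := by
    intro z₀
    refine Finset.analyticAt_fun_sum _ (fun j _ => ?_)
    exact ((EuclideanSpace.proj j : EuclideanSpace ℂ (Fin n) →L[ℂ] ℂ).analyticAt
      z₀).smul analyticAt_const
  have hσcont : Continuous (fun z : EuclideanSpace ℂ (Fin n) => ∑ j, z j • S j) := by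
    refine continuous_iff_continuousAt.2 fun z => (hσan z).continuousAt
  -- norm identity from unitarity
  have hnormsq : ∀ (k : K') (x : EuclideanSpace ℂ (Fin N)),
      ‖A k + B x‖ ^ 2 + ‖C k + D x‖ ^ 2 = ‖k‖ ^ 2 + ‖x‖ ^ 2 := by
    intro k x
    have h1 := U.norm_map ((WithLp.equiv 2 (K' × EuclideanSpace ℂ (Fin N))).symm (k, x))
    rw [hU k x] at h1
    have h2 := WithLp.prod_norm_sq_eq_of_L2
      ((WithLp.equiv 2 (K' × EuclideanSpace ℂ (Fin N))).symm (A k + B x, C k + D x))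
    have h3 := WithLp.prod_norm_sq_eq_of_L2
      ((WithLp.equiv 2 (K' × EuclideanSpace ℂ (Fin N))).symm (k, x))
    simp only [WithLp.equiv_symm_apply, WithLp.toLp_fst, WithLp.toLp_snd] at h1 h2 h3
    rw [← h2, ← h3, h1]
  -- ‖A‖ ≤ 1
  have hA : ‖A‖ ≤ 1 := by
    refine opNorm_le_bound _ zero_le_one (fun k => ?_)
    have := hnormsq k 0
    simp only [map_zero, add_zero, norm_zero] at this
    have h4 : ‖A k‖ ^ 2 ≤ ‖k‖ ^ 2 := by nlinarith [sq_nonneg ‖C k‖]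
    rw [one_mul]
    nlinarith [norm_nonneg (A k), norm_nonneg k]
  -- invertibility on Ω
  have hunit : ∀ z ∈ Ω, IsUnit (1 - (∑ j, z j • S j) ∘L A) := by
    intro z hz
    rw [hΩ] at hz
    have hTA : ‖(∑ j, z j • S j) ∘L A‖ < 1 := by
      calc ‖(∑ j, z j • S j) ∘L A‖ ≤ ‖∑ j, z j • S j‖ * ‖A‖ := opNorm_comp_le _ _
        _ ≤ ‖∑ j, z j • S j‖ * 1 := by
            exact mul_le_mul_of_nonneg_left hA (norm_nonneg _)
        _ < 1 := by rw [mul_one]; exact hz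
    exact isUnit_one_sub_of_norm_lt_one hTA
  refine ⟨?_, hunit, ?_, ?_⟩
  · rw [hΩ]
    exact isOpen_lt (continuous_norm.comp hσcont) continuous_const
  · -- analyticity
    have hfeq : f = fun z => D + C ∘L Ring.inverse (1 - (∑ j, z j • S j) ∘L A) ∘L
        (∑ j, z j • S j) ∘L B := funext hf
    rw [hfeq]
    intro z₀ hz₀
    have hσ := hσan z₀
    -- z ↦ 1 - σ z ∘L A
    have h1 : AnalyticAt ℂ
        (fun z : EuclideanSpace ℂ (Fin n) => 1 - (∑ j, z j • S j) ∘L A) z₀ := by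
      refine analyticAt_const.sub ?_
      exact (((compL ℂ K' K' K').flip A).analyticAt _).comp hσ
    have hg : AnalyticAt ℂ
        (fun z : EuclideanSpace ℂ (Fin n) =>
          Ring.inverse (1 - (∑ j, z j • S j) ∘L A)) z₀ := by
      have hinvAt : AnalyticAt ℂ Ring.inverse (1 - (∑ j, z₀ j • S j) ∘L A) := by
        have := analyticAt_inverse (𝕜 := ℂ) ((hunit z₀ hz₀).unit)
        rwa [IsUnit.unit_spec] at this
      simpa [Function.comp_def] using AnalyticAt.comp (g := Ring.inverse)
        (f := fun z : EuclideanSpace ℂ (Fin n) => 1 - (∑ j, z j • S j) ∘L A) hinvAt h1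
    have h2 : AnalyticAt ℂ
        (fun z : EuclideanSpace ℂ (Fin n) => (∑ j, z j • S j) ∘L B) z₀ :=
      (((compL ℂ (EuclideanSpace ℂ (Fin N)) K' K').flip B).analyticAt _).comp hσ
    have h3 : AnalyticAt ℂ
        (fun z : EuclideanSpace ℂ (Fin n) =>
          Ring.inverse (1 - (∑ j, z j • S j) ∘L A) ∘L ((∑ j, z j • S j) ∘L B)) z₀ :=
      ((compL ℂ (EuclideanSpace ℂ (Fin N)) K' K').analyticAt_bilinear _).comp (hg.prod h2)
    have h4 : AnalyticAt ℂ
        (fun z : EuclideanSpace ℂ (Fin n) =>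
          C ∘L (Ring.inverse (1 - (∑ j, z j • S j) ∘L A) ∘L ((∑ j, z j • S j) ∘L B))) z₀ :=
      (((compL ℂ (EuclideanSpace ℂ (Fin N)) K' (EuclideanSpace ℂ (Fin N))) C).analyticAt
        _).comp h3
    exact analyticAt_const.add h4
  · -- norm bound
    intro z hz
    set T : K' →L[ℂ] K' := ∑ j, z j • S j with hT
    have hTlt : ‖T‖ < 1 := by rw [hΩ] at hz; exact hz
    have hu := hunit z hz
    refine opNorm_le_bound _ zero_le_one (fun x => ?_)
    set k : K' := Ring.inverse (1 - T ∘L A) ((T ∘L B) x) with hk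
    have hcancel : (1 - T ∘L A) k = T (B x) := by
      have h5 : ((1 - T ∘L A) * Ring.inverse (1 - T ∘L A)) ((T ∘L B) x)
          = (1 : K' →L[ℂ] K') ((T ∘L B) x) := by rw [Ring.mul_inverse_cancel _ hu]
      simpa [hk] using h5
    set u : K' := A k + B x with hu'
    set v : EuclideanSpace ℂ (Fin N) := C k + D x with hv
    have hkTu : k = T u := by
      have : k - T (A k) = T (B x) := by
        have := hcancel
        simpa [sub_apply, comp_apply] using this
      rw [hu', map_add]
      linear_combination (norm := module) this
    have hns := hnormsq k x
    have hku : ‖k‖ ≤ ‖u‖ := by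
      rw [hkTu]
      calc ‖T u‖ ≤ ‖T‖ * ‖u‖ := le_opNorm _ _
        _ ≤ 1 * ‖u‖ := mul_le_mul_of_nonneg_right hTlt.le (norm_nonneg _)
        _ = ‖u‖ := one_mul _
    have hvx : ‖v‖ ≤ ‖x‖ := by
      have hsq : ‖v‖ ^ 2 ≤ ‖x‖ ^ 2 := by
        have : ‖u‖ ^ 2 + ‖v‖ ^ 2 = ‖k‖ ^ 2 + ‖x‖ ^ 2 := hns
        nlinarith [norm_nonneg k, norm_nonneg u]
      nlinarith [norm_nonneg v, norm_nonneg x]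
    have hfx : f z x = v := by
      rw [hf z]
      simp only [add_apply, comp_apply, hv]
      rw [add_comm]
      rfl
    rw [hfx, one_mul]
    exact hvx
end

section
/- Let n, d, m be positive integers, let T₁, …, T_n ∈ M_d(ℂ), define σ(z) := z₁T₁ + ⋯ + z_nT_n for z ∈ ℂⁿ, and set Ω := { z ∈ ℂⁿ : ‖σ(z)‖ < 1 }. Suppose λ₁, …, λ_m ∈ Ω, w₁, …, w_m ∈ ℂ, and there exist row vectors v₁, …, v_m ∈ ℂ^d such that 1 − w_i \overline{w_j} = v_i (I_d − σ(λ_i) σ(λ_j)*) v_j* for all i, j = 1, …, m. Then there exists an analytic function f : Ω → ℂ with |f(z)| ≤ 1 for all z ∈ Ω and f(λ_j) = w_j for every j = 1, …, m. -/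
open Matrix Finset

set_option synthInstance.maxHeartbeats 1000000
set_option maxHeartbeats 1000000

lemma euclid_apply {d : ℕ} (N : Matrix (Fin d) (Fin d) ℂ) (y : EuclideanSpace ℂ (Fin d))
    (j : Fin d) : (Matrix.toEuclideanCLM (𝕜 := ℂ) N y) j = ∑ l, N j l * y l := by
  have : (Matrix.toEuclideanCLM (𝕜 := ℂ) N y) j
      = (Matrix.toLin' N (WithLp.equiv 2 _ y)) j := rfl
  rw [this, Matrix.toLin'_apply]
  simp [Matrix.mulVec, dotProduct]

lemma opnorm_transpose_le {d : ℕ} (M : Matrix (Fin d) (Fin d) ℂ) :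
    ‖Matrix.toEuclideanCLM (𝕜 := ℂ) Mᵀ‖ ≤ ‖Matrix.toEuclideanCLM (𝕜 := ℂ) M‖ := by
  have hMt : Mᵀ = (M.map (starRingEnd ℂ))ᴴ := by
    ext i j
    simp [Matrix.conjTranspose_apply, Matrix.map_apply]
  rw [hMt, show (M.map ⇑(starRingEnd ℂ))ᴴ = star (M.map ⇑(starRingEnd ℂ)) from rfl,
    map_star, ContinuousLinearMap.star_eq_adjoint,
    show ∀ A : EuclideanSpace ℂ (Fin d) →L[ℂ] EuclideanSpace ℂ (Fin d),
      ‖ContinuousLinearMap.adjoint A‖ = ‖A‖ from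
      fun A => (ContinuousLinearMap.adjoint (𝕜 := ℂ)).norm_map A]
  refine ContinuousLinearMap.opNorm_le_bound _ (norm_nonneg _) fun x => ?_
  set xs : EuclideanSpace ℂ (Fin d) :=
    (WithLp.equiv 2 (Fin d → ℂ)).symm (fun i => (starRingEnd ℂ) (x i)) with hxs_def
  have hxsl : ∀ l, xs l = (starRingEnd ℂ) (x l) := fun l => rfl
  have hxs : ‖xs‖ = ‖x‖ := by
    rw [EuclideanSpace.norm_eq, EuclideanSpace.norm_eq]
    congr 1
    exact Finset.sum_congr rfl fun i _ => by rw [hxsl]; simp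
  have hpt : ∀ j, (Matrix.toEuclideanCLM (𝕜 := ℂ) (M.map (starRingEnd ℂ)) x) j
      = (starRingEnd ℂ) ((Matrix.toEuclideanCLM (𝕜 := ℂ) M xs) j) := by
    intro j
    rw [euclid_apply, euclid_apply, map_sum]
    exact Finset.sum_congr rfl fun l _ => by rw [hxsl]; simp [Matrix.map_apply]
  have h1 : ‖Matrix.toEuclideanCLM (𝕜 := ℂ) (M.map (starRingEnd ℂ)) x‖
      = ‖Matrix.toEuclideanCLM (𝕜 := ℂ) M xs‖ := by
    rw [EuclideanSpace.norm_eq, EuclideanSpace.norm_eq]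
    congr 1
    exact Finset.sum_congr rfl fun j _ => by rw [hpt]; simp
  rw [h1, ← hxs]
  exact ContinuousLinearMap.le_opNorm _ _

local notation "⟪" x ", " y "⟫" => @inner ℂ _ _ x y

lemma exists_isometry_of_gram {V : Type*} [NormedAddCommGroup V] [InnerProductSpace ℂ V]
    [FiniteDimensional ℂ V] {m : ℕ} (b a : Fin m → V)
    (h : ∀ i j, ⟪b i, b j⟫ = ⟪a i, a j⟫) :
    ∃ L : V →ₗᵢ[ℂ] V, ∀ i, L (b i) = a i := by
  classical
  let P : (Fin m → ℂ) →ₗ[ℂ] V :=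
    { toFun := fun t => ∑ i, t i • b i
      map_add' := by intro t u; simp [add_smul, Finset.sum_add_distrib]
      map_smul' := by intro c t; simp [smul_smul, Finset.smul_sum] }
  let Q : (Fin m → ℂ) →ₗ[ℂ] V :=
    { toFun := fun t => ∑ i, t i • a i
      map_add' := by intro t u; simp [add_smul, Finset.sum_add_distrib]
      map_smul' := by intro c t; simp [smul_smul, Finset.smul_sum] }
  have hPQ : ∀ t u, ⟪P t, P u⟫ = ⟪Q t, Q u⟫ := by
    intro t u
    simp only [P, Q, LinearMap.coe_mk, AddHom.coe_mk, sum_inner, inner_sum,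
      inner_smul_left, inner_smul_right, h]
  have hker : LinearMap.ker P ≤ LinearMap.ker Q := by
    intro t ht
    have : ⟪Q t, Q t⟫ = 0 := by rw [← hPQ]; simp [LinearMap.mem_ker.mp ht]
    simpa [LinearMap.mem_ker, inner_self_eq_zero] using this
  let Lq : ((Fin m → ℂ) ⧸ LinearMap.ker P) →ₗ[ℂ] V := (LinearMap.ker P).liftQ Q hker
  let L0 : LinearMap.range P →ₗ[ℂ] V := Lq ∘ₗ (P.quotKerEquivRange.symm : _ →ₗ[ℂ] _)
  have key : ∀ t : Fin m → ℂ, L0 ⟨P t, LinearMap.mem_range_self P t⟩ = Q t := by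
    intro t
    simp only [L0, LinearMap.coe_comp, Function.comp_apply, LinearEquiv.coe_coe]
    rw [LinearMap.quotKerEquivRange_symm_apply_image]
    simp [Lq]
  have hnorm : ∀ x : LinearMap.range P, ‖L0 x‖ = ‖(x : V)‖ := by
    rintro ⟨x, t, rfl⟩
    have : L0 ⟨P t, LinearMap.mem_range_self P t⟩ = Q t := key t
    rw [this]
    have h2 : ⟪Q t, Q t⟫ = ⟪P t, P t⟫ := (hPQ t t).symm
    have := congrArg (RCLike.re (K := ℂ)) h2
    show ‖Q t‖ = ‖P t‖ 
    rw [inner_self_eq_norm_sq (𝕜 := ℂ), inner_self_eq_norm_sq (𝕜 := ℂ)] at this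
    nlinarith [norm_nonneg (Q t), norm_nonneg (P t)]
  let Li : LinearMap.range P →ₗᵢ[ℂ] V := ⟨L0, hnorm⟩
  refine ⟨Li.extend, fun i => ?_⟩
  have hb : b i = P (Pi.single i 1) := by
    simp [P, Pi.single_apply, ite_smul]
  have hmem : b i ∈ LinearMap.range P := ⟨Pi.single i 1, hb.symm⟩
  have : Li.extend ((⟨b i, hmem⟩ : LinearMap.range P) : V) = Li ⟨b i, hmem⟩ :=
    Li.extend_apply _
  rw [show (((⟨b i, hmem⟩ : LinearMap.range P) : V)) = b i from rfl] at this
  rw [this]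
  show L0 ⟨b i, hmem⟩ = a i
  have : (⟨b i, hmem⟩ : LinearMap.range P) = ⟨P (Pi.single i 1), LinearMap.mem_range_self P _⟩ := by
    simp [hb]
  rw [this, key]
  simp [Q, Pi.single_apply, ite_smul]

/-- sufficiency in Nevanlinna–Pick interpolation for `UC^∞(E)`.
Given matrices `T₁, …, T_n`, `σ(z) = ∑ z_k T_k`, `Ω = {‖σ(z)‖ < 1}`, interpolation nodes
`λ₁, …, λ_m ∈ Ω`, targets `w₁, …, w_m ∈ ℂ`, and row vectors `v₁, …, v_m` with
`1 − w_i \overline{w_j} = v_i (I − σ(λ_i)σ(λ_j)*) v_j*`, there is an analytic function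
`f : Ω → ℂ`, bounded by `1` on `Ω`, with `f(λ_j) = w_j` for all `j`. -/
theorem statement12
    {n d m : ℕ} (hn : 0 < n) (hd : 0 < d) (hm : 0 < m)
    (T : Fin n → Matrix (Fin d) (Fin d) ℂ)
    (σ : EuclideanSpace ℂ (Fin n) → Matrix (Fin d) (Fin d) ℂ)
    (hσ : ∀ z, σ z = ∑ k, z k • T k)
    (Ω : Set (EuclideanSpace ℂ (Fin n)))
    (hΩ : Ω = {z : EuclideanSpace ℂ (Fin n) | l2OpNorm (σ z) < 1})
    (lam : Fin m → EuclideanSpace ℂ (Fin n)) (hlam : ∀ j, lam j ∈ Ω)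
    (w : Fin m → ℂ) (v : Fin m → Matrix (Fin 1) (Fin d) ℂ)
    (hNP : ∀ i j : Fin m,
      !![1 - w i * (starRingEnd ℂ) (w j)] =
        v i * ((1 : Matrix (Fin d) (Fin d) ℂ) - σ (lam i) * (σ (lam j))ᴴ) * (v j)ᴴ) :
    ∃ f : EuclideanSpace ℂ (Fin n) → ℂ,
      AnalyticOnNhd ℂ f Ω ∧ (∀ z ∈ Ω, ‖f z‖ ≤ 1) ∧
      ∀ j, f (lam j) = w j := by
  classical
  -- the linear map z ↦ operator of (σ z)ᵀ
  have hσadd : ∀ z z', σ (z + z') = σ z + σ z' := by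
    intro z z'
    rw [hσ, hσ, hσ, ← Finset.sum_add_distrib]
    exact Finset.sum_congr rfl fun k _ => by
      show ((z + z') k) • T k = _
      simp [add_smul]
  have hσsmul : ∀ (c : ℂ) z, σ (c • z) = c • σ z := by
    intro c z
    rw [hσ, hσ, Finset.smul_sum]
    exact Finset.sum_congr rfl fun k _ => by
      show ((c • z) k) • T k = _
      simp [smul_smul]
  let Slin : EuclideanSpace ℂ (Fin n) →ₗ[ℂ]
      (EuclideanSpace ℂ (Fin d) →L[ℂ] EuclideanSpace ℂ (Fin d)) :=
    { toFun := fun z => Matrix.toEuclideanCLM (𝕜 := ℂ) (σ z)ᵀ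
      map_add' := by
        intro z z'
        show Matrix.toEuclideanCLM (𝕜 := ℂ) (σ (z + z'))ᵀ = _
        rw [hσadd, Matrix.transpose_add, map_add]
      map_smul' := by
        intro c z
        show Matrix.toEuclideanCLM (𝕜 := ℂ) (σ (c • z))ᵀ = _
        rw [hσsmul, Matrix.transpose_smul, _root_.map_smul]
        rfl }
  have hl2 : ∀ M : Matrix (Fin d) (Fin d) ℂ,
      l2OpNorm M = ‖Matrix.toEuclideanCLM (𝕜 := ℂ) M‖ := fun M => rfl
  have hSnorm : ∀ z ∈ Ω, ‖Slin z‖ < 1 := by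
    intro z hz
    rw [hΩ] at hz
    exact lt_of_le_of_lt (opnorm_transpose_le (σ z)) (by rw [← hl2]; exact hz)
  -- vectors
  let y : Fin m → EuclideanSpace ℂ (Fin d) :=
    fun i => (WithLp.equiv 2 (Fin d → ℂ)).symm (fun k => v i 0 k)
  let bvec : Fin m → WithLp 2 (ℂ × EuclideanSpace ℂ (Fin d)) :=
    fun i => (WithLp.equiv 2 _).symm (1, Slin (lam i) (y i))
  let avec : Fin m → WithLp 2 (ℂ × EuclideanSpace ℂ (Fin d)) :=
    fun i => (WithLp.equiv 2 _).symm (w i, y i)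
  have hmm : ∀ (A B : Matrix (Fin 1) (Fin d) ℂ),
      (A * Bᴴ) 0 0 = ∑ k, (starRingEnd ℂ) (B 0 k) * A 0 k := by
    intro A B
    simp [Matrix.mul_apply, Matrix.conjTranspose_apply, mul_comm]
  have hGram : ∀ i j, @inner ℂ _ _ (bvec i) (bvec j) = @inner ℂ _ _ (avec i) (avec j) := by
    intro i j
    have hent := congrArg (fun M : Matrix (Fin 1) (Fin 1) ℂ => M 0 0) (hNP j i)
    simp only [Matrix.cons_val', Matrix.cons_val_zero, Matrix.empty_val',
      Matrix.cons_val_fin_one, Matrix.of_apply, Matrix.cons_val_zero] at hent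
    have halg : v j * ((1 : Matrix (Fin d) (Fin d) ℂ) - σ (lam j) * (σ (lam i))ᴴ) * (v i)ᴴ
        = v j * (v i)ᴴ - (v j * σ (lam j)) * ((v i) * σ (lam i))ᴴ := by
      rw [Matrix.mul_sub, Matrix.mul_one, Matrix.sub_mul, Matrix.conjTranspose_mul]
      rw [Matrix.mul_assoc (v j) (σ (lam j)), Matrix.mul_assoc (v j) (σ (lam j) * (σ (lam i))ᴴ),
        Matrix.mul_assoc (σ (lam j))]
    rw [halg, Matrix.sub_apply] at hent
    have hrow : ∀ (i : Fin m) (l : Fin d), (Slin (lam i) (y i)) l = (v i * σ (lam i)) 0 l := by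
      intro i l
      show (Matrix.toEuclideanCLM (𝕜 := ℂ) (σ (lam i))ᵀ (y i)) l = _
      rw [euclid_apply]
      simp only [Matrix.mul_apply, Matrix.transpose_apply]
      exact Finset.sum_congr rfl fun k _ => by
        show σ (lam i) k l * (y i) k = _
        have : (y i) k = v i 0 k := rfl
        rw [this, mul_comm]
    have hy : (inner ℂ (y i) (y j) : ℂ) = (v j * (v i)ᴴ) 0 0 := by
      rw [hmm, PiLp.inner_apply]
      exact Finset.sum_congr rfl fun k _ => RCLike.inner_apply' _ _
    have hsin : (inner ℂ (Slin (lam i) (y i)) (Slin (lam j) (y j)) : ℂ)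
        = ((v j * σ (lam j)) * ((v i) * σ (lam i))ᴴ) 0 0 := by
      rw [hmm, PiLp.inner_apply]
      refine Finset.sum_congr rfl fun l _ => ?_
      rw [hrow i l, hrow j l]
      exact RCLike.inner_apply' _ _
    rw [WithLp.prod_inner_apply, WithLp.prod_inner_apply]
    have hb1 : (bvec i).ofLp.1 = (1 : ℂ) := rfl
    have hb2 : (bvec i).ofLp.2 = Slin (lam i) (y i) := rfl
    have hb1' : (bvec j).ofLp.1 = (1 : ℂ) := rfl
    have hb2' : (bvec j).ofLp.2 = Slin (lam j) (y j) := rfl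
    have ha1 : (avec i).ofLp.1 = w i := rfl
    have ha2 : (avec i).ofLp.2 = y i := rfl
    have ha1' : (avec j).ofLp.1 = w j := rfl
    have ha2' : (avec j).ofLp.2 = y j := rfl
    rw [hb1, hb2, hb1', hb2', ha1, ha2, ha1', ha2', hsin, hy]
    rw [RCLike.inner_apply, RCLike.inner_apply]
    rw [_root_.map_one, one_mul]
    linear_combination hent
  obtain ⟨V, hV⟩ := exists_isometry_of_gram bvec avec hGram
  -- components
  let eL := WithLp.linearEquiv 2 ℂ (ℂ × EuclideanSpace ℂ (Fin d))
  let Wlin : (ℂ × EuclideanSpace ℂ (Fin d)) →ₗ[ℂ] (ℂ × EuclideanSpace ℂ (Fin d)) :=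
    (eL : _ →ₗ[ℂ] _) ∘ₗ V.toLinearMap ∘ₗ (eL.symm : _ →ₗ[ℂ] _)
  let aS : ℂ := (Wlin (1, 0)).1
  let c0 : EuclideanSpace ℂ (Fin d) := (Wlin (1, 0)).2
  let blin : EuclideanSpace ℂ (Fin d) →ₗ[ℂ] ℂ :=
    (LinearMap.fst ℂ ℂ _) ∘ₗ Wlin ∘ₗ (LinearMap.inr ℂ ℂ _)
  let dlin : EuclideanSpace ℂ (Fin d) →ₗ[ℂ] EuclideanSpace ℂ (Fin d) :=
    (LinearMap.snd ℂ ℂ _) ∘ₗ Wlin ∘ₗ (LinearMap.inr ℂ ℂ _)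
  have hW : ∀ (t : ℂ) (yv : EuclideanSpace ℂ (Fin d)),
      Wlin (t, yv) = (aS * t + blin yv, t • c0 + dlin yv) := by
    intro t yv
    have : (t, yv) = t • ((1 : ℂ), (0 : EuclideanSpace ℂ (Fin d))) + (0, yv) := by
      simp [Prod.ext_iff]
    rw [this, map_add, _root_.map_smul]
    simp only [Wlin, blin, dlin, LinearMap.comp_apply, LinearMap.fst_apply, LinearMap.snd_apply,
      LinearMap.inr_apply]
    refine Prod.ext ?_ ?_
    · show t • aS + blin yv = aS * t + blin yv
      rw [smul_eq_mul, mul_comm]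
    · rfl
  have hWV : ∀ p : ℂ × EuclideanSpace ℂ (Fin d),
      V ((WithLp.equiv 2 _).symm p) = (WithLp.equiv 2 _).symm (Wlin p) := by
    intro p; rfl
  have nid : ∀ (t : ℂ) (yv : EuclideanSpace ℂ (Fin d)),
      ‖aS * t + blin yv‖ ^ 2 + ‖t • c0 + dlin yv‖ ^ 2 = ‖t‖ ^ 2 + ‖yv‖ ^ 2 := by
    intro t yv
    have h1 : ‖V ((WithLp.equiv 2 _).symm (t, yv))‖ = ‖(WithLp.equiv 2 (ℂ × _)).symm (t, yv)‖ :=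
      V.norm_map _
    rw [hWV, hW] at h1
    have h2 := congrArg (fun r : ℝ => r ^ 2) h1
    simpa [WithLp.prod_norm_sq_eq_of_L2] using h2
  have hdnorm : ∀ yv, ‖dlin yv‖ ≤ ‖yv‖ := by
    intro yv
    have h0 := nid 0 yv
    simp at h0
    nlinarith [norm_nonneg (blin yv), norm_nonneg (dlin yv), norm_nonneg yv,
      sq_nonneg (‖dlin yv‖ - ‖yv‖), sq_nonneg (‖dlin yv‖ + ‖yv‖)]
  let dC : EuclideanSpace ℂ (Fin d) →L[ℂ] EuclideanSpace ℂ (Fin d) :=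
    LinearMap.toContinuousLinearMap dlin
  let bC : EuclideanSpace ℂ (Fin d) →L[ℂ] ℂ := LinearMap.toContinuousLinearMap blin
  have hdC : ‖dC‖ ≤ 1 :=
    ContinuousLinearMap.opNorm_le_bound _ zero_le_one fun x => by
      rw [one_mul]; exact hdnorm x
  have hunit : ∀ z ∈ Ω, ‖dC.comp (Slin z)‖ < 1 := by
    intro z hz
    have h1 := ContinuousLinearMap.opNorm_comp_le dC (Slin z)
    have h2 := hSnorm z hz
    nlinarith [norm_nonneg (Slin z), norm_nonneg dC, norm_nonneg (dC.comp (Slin z))]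
  have hIsU : ∀ z ∈ Ω, IsUnit ((1 : _) - dC.comp (Slin z)) := fun z hz =>
    (Units.oneSub _ (hunit z hz)).isUnit
  refine ⟨fun z => aS + bC (((Slin z) * Ring.inverse ((1 : _) - dC.comp (Slin z))) c0),
    ?_, ?_, ?_⟩
  · -- analytic
    intro z hz
    have hA1 : AnalyticAt ℂ (fun z => Slin z) z := by
      exact (LinearMap.toContinuousLinearMap Slin).analyticAt z
    have hA2 : AnalyticAt ℂ (fun z => (1 : _) - dC.comp (Slin z)) z := by
      refine analyticAt_const.sub ?_
      have := ((ContinuousLinearMap.compL ℂ (EuclideanSpace ℂ (Fin d)) (EuclideanSpace ℂ (Fin d))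
        (EuclideanSpace ℂ (Fin d)) dC).comp (LinearMap.toContinuousLinearMap Slin)).analyticAt z
      have he : ⇑((ContinuousLinearMap.compL ℂ (EuclideanSpace ℂ (Fin d))
          (EuclideanSpace ℂ (Fin d)) (EuclideanSpace ℂ (Fin d)) dC).comp
          (LinearMap.toContinuousLinearMap Slin)) = fun z => dC.comp (Slin z) := by
        funext z; rfl
      rwa [he] at this
    have hA3 : AnalyticAt ℂ (fun z => Ring.inverse ((1 : _) - dC.comp (Slin z))) z := by
      have hu := hIsU z hz
      have h4 : AnalyticAt ℂ Ring.inverse ((1 : _) - dC.comp (Slin z)) := by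
        have := analyticAt_inverse (𝕜 := ℂ) hu.unit
        rwa [IsUnit.unit_spec] at this
      have h5 := AnalyticAt.comp (g := Ring.inverse)
        (f := fun z => (1 : _) - dC.comp (Slin z)) (x := z) h4 hA2
      exact h5
    have hA4 := hA1.mul hA3
    have hA5 : AnalyticAt ℂ (fun z => bC (((Slin z) *
        Ring.inverse ((1 : _) - dC.comp (Slin z))) c0)) z := by
      have hcl := (bC.comp (ContinuousLinearMap.apply ℂ (EuclideanSpace ℂ (Fin d)) c0)).analyticAt
        ((Slin z) * Ring.inverse ((1 : _) - dC.comp (Slin z)))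
      have h6 := AnalyticAt.comp
        (g := ⇑(bC.comp (ContinuousLinearMap.apply ℂ (EuclideanSpace ℂ (Fin d)) c0)))
        (f := fun z => (Slin z) * Ring.inverse ((1 : _) - dC.comp (Slin z))) (x := z) hcl hA4
      exact h6
    exact analyticAt_const.add hA5
  · -- bound
    intro z hz
    show ‖aS + bC ((Slin z * Ring.inverse ((1 : _) - dC.comp (Slin z))) c0)‖ ≤ 1
    set s := Slin z with hs
    set X : EuclideanSpace ℂ (Fin d) := Ring.inverse ((1 : _) - dC.comp s) c0 with hX
    have hmulapp : ((s * Ring.inverse ((1 : _) - dC.comp s)) c0) = s X := rfl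
    have hc0 : c0 + dlin (s X) = X := by
      have h1 : ((1 - dC.comp s) * Ring.inverse (1 - dC.comp s)) c0 = c0 := by
        rw [Ring.mul_inverse_cancel _ (hIsU z hz)]; rfl
      have h2 : X - dC (s X) = c0 := by
        have : ((1 - dC.comp s) * Ring.inverse (1 - dC.comp s)) c0
            = (1 - dC.comp s) X := rfl
        rw [this] at h1
        simpa using h1
      rw [← h2]
      have : dC (s X) = dlin (s X) := rfl
      rw [← this]; abel
    have h2 := nid 1 (s X)
    rw [mul_one, one_smul, hc0] at h2
    have h3 : ‖s X‖ ≤ ‖X‖ := by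
      have := s.le_opNorm X
      have h4 := hSnorm z hz
      nlinarith [norm_nonneg X]
    rw [hmulapp]
    have hb : bC (s X) = blin (s X) := rfl
    rw [hb]
    rw [norm_one] at h2
    have hsq : ‖aS + blin (s X)‖ ^ 2 ≤ 1 := by
      nlinarith [mul_le_mul h3 h3 (norm_nonneg (s X)) (norm_nonneg X)]
    exact (pow_le_one_iff_of_nonneg (norm_nonneg _) two_ne_zero).mp hsq
  · -- interpolation
    intro j
    have hWj : Wlin (1, Slin (lam j) (y j)) = (w j, y j) := by
      have h1 : Wlin (1, Slin (lam j) (y j)) = eL (V (bvec j)) := rfl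
      rw [h1, hV j]
      rfl
    rw [hW] at hWj
    have hfst : aS * 1 + blin (Slin (lam j) (y j)) = w j := congrArg Prod.fst hWj
    have hsnd : (1 : ℂ) • c0 + dlin (Slin (lam j) (y j)) = y j := congrArg Prod.snd hWj
    rw [one_smul] at hsnd
    rw [mul_one] at hfst
    set s := Slin (lam j) with hs
    have hyx : Ring.inverse ((1 : _) - dC.comp s) c0 = y j := by
      have h1 : ((1 : _) - dC.comp s) (y j) = c0 := by
        have : dC (s (y j)) = dlin (s (y j)) := rfl
        simp only [ContinuousLinearMap.sub_apply, ContinuousLinearMap.one_apply,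
          ContinuousLinearMap.comp_apply, this]
        rw [sub_eq_iff_eq_add]; exact hsnd.symm
      have h2 : (Ring.inverse ((1 : _) - dC.comp s) * ((1 : _) - dC.comp s)) (y j) = y j := by
        rw [Ring.inverse_mul_cancel _ (hIsU (lam j) (hlam j))]; rfl
      have h3 : (Ring.inverse ((1 : _) - dC.comp s) * ((1 : _) - dC.comp s)) (y j)
          = Ring.inverse ((1 : _) - dC.comp s) (((1 : _) - dC.comp s) (y j)) := rfl
      rw [h3, h1] at h2
      exact h2
    have hmulapp : ((s * Ring.inverse ((1 : _) - dC.comp s)) c0) = s (Ring.inverse ((1 : _) - dC.comp s) c0) := rfl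
    show aS + bC ((s * Ring.inverse ((1 : _) - dC.comp s)) c0) = w j
    rw [hmulapp, hyx]
    exact hfst
end
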